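/- arXiv:1912.11787 — 6 statements merged into one kernel-verified Lean document; each statement's English description precedes it below -/
import Mathlib

section
/- If f(z) = Σ aₙzⁿ is analytic in the unit disk with |f(z)| ≤ 1 for all |z| < 1, then Σ |aₙ| rⁿ ≤ 1 for all 0 ≤ r ≤ 1/3. -/
open Metric FormalMultilinearSeries

lemma bohr_hasFPS (a : ℕ → ℂ) (f : ℂ → ℂ)
    (hf : ∀ z : ℂ, ‖z‖ < 1 → HasSum (fun n => a n * z ^ n) (f z)) :
    HasFPowerSeriesOnBall f (ofScalars ℂ a) 0 1 := by
  constructor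
  · refine ENNReal.le_of_forall_nnreal_lt fun r hr => ?_
    apply le_radius_of_summable_norm
    have h1 : ‖((r:ℝ):ℂ)‖ < 1 := by
      rw [Complex.norm_real, Real.norm_eq_abs, abs_of_nonneg r.coe_nonneg]
      exact_mod_cast hr
      
    have hs : Summable (fun n => ‖a n‖ * (r:ℝ) ^ n) := by
      have := (hf _ h1).summable.norm
      refine this.congr fun n => ?_
      simp [norm_mul, norm_pow, Complex.norm_real, abs_of_nonneg r.coe_nonneg]
    refine hs.congr fun n => ?_
    rw [ofScalars_norm]
  · exact one_pos
  · intro y hy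
    have hy' : ‖y‖ < 1 := by
      rw [← ENNReal.coe_one, Metric.eball_coe, NNReal.coe_one] at hy
      simpa using hy
    have := hf y hy'
    simp only [ofScalars_apply_eq, smul_eq_mul, zero_add]
    exact this.congr_fun (fun n => by ring)

lemma bohr_coeff (a : ℕ → ℂ) (n : ℕ) : (ofScalars ℂ a).coeff n = a n := by
  have h := ofScalars_apply_eq (𝕜 := ℂ) (c := a) (1:ℂ) n
  simp only [smul_eq_mul, one_pow, mul_one] at h
  exact h

lemma bohr_key (a : ℕ → ℂ) (f : ℂ → ℂ)
    (hf : ∀ z : ℂ, ‖z‖ < 1 → HasSum (fun n => a n * z ^ n) (f z))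
    (hb : ∀ z : ℂ, ‖z‖ < 1 → ‖f z‖ ≤ 1) :
    ‖a 1‖ ≤ 1 - ‖a 0‖ ^ 2 := by
  have hps := bohr_hasFPS a f hf
  have hat : HasFPowerSeriesAt f (ofScalars ℂ a) 0 := ⟨1, hps⟩
  have hf0 : f 0 = a 0 := by
    have h := (hf 0 (by simp)).unique (hasSum_single (f := fun n => a n * (0:ℂ)^n) 0
      (by intro m hm; simp [zero_pow hm]))
    simp only [pow_zero, mul_one] at h; exact h
  have hballs : Metric.eball (0:ℂ) 1 = ball (0:ℂ) 1 := by
    rw [← ENNReal.coe_one, Metric.emetric_ball_nnreal, NNReal.coe_one]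
  have hdiff : DifferentiableOn ℂ f (ball (0:ℂ) 1) := by
    rw [← hballs]; exact hps.differentiableOn
  have ha0le : ‖a 0‖ ≤ 1 := hf0 ▸ hb 0 (by simp)
  have hfd : HasDerivAt f (a 1) 0 := by
    have h := hat.hasDerivAt
    rwa [show ((ofScalars ℂ a 1) fun _ => (1:ℂ)) = a 1 from by
      simpa using ofScalars_apply_eq (𝕜 := ℂ) (c := a) (1:ℂ) 1] at h
  rcases lt_or_eq_of_le ha0le with h1 | h1
  · -- |a 0| < 1 : Möbius + Schwarz
    set b := a 0 with hbdef
    have hcb : (starRingEnd ℂ) b * b = ((‖b‖^2 : ℝ) : ℂ) := by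
      rw [mul_comm, Complex.mul_conj, Complex.normSq_eq_norm_sq]
    set g : ℂ → ℂ := fun z => (f z - b) / (1 - (starRingEnd ℂ) b * f z) with hg
    have hden : ∀ z ∈ ball (0:ℂ) 1, 1 - (starRingEnd ℂ) b * f z ≠ 0 := by
      intro z hz
      have hlt : ‖(starRingEnd ℂ) b * f z‖ < 1 := by
        rw [norm_mul, RCLike.norm_conj]
        calc ‖b‖ * ‖f z‖ ≤ ‖b‖ * 1 :=
              mul_le_mul_of_nonneg_left (hb z (by simpa [mem_ball, dist_eq_norm] using hz))
                (norm_nonneg b)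
          _ < 1 := by simpa using h1
      intro h
      rw [sub_eq_zero] at h
      rw [← h] at hlt; simp at hlt
    have hgd : DifferentiableOn ℂ g (ball (0:ℂ) 1) :=
      DifferentiableOn.div (hdiff.sub_const b)
        ((differentiableOn_const 1).sub ((differentiableOn_const _).mul hdiff)) hden
    have hg0 : g 0 = 0 := by simp [hg, hf0]
    have hgle : ∀ z ∈ ball (0:ℂ) 1, ‖g z‖ ≤ 1 := by
      intro z hz
      have hfz : ‖f z‖ ≤ 1 := hb z (by simpa [mem_ball, dist_eq_norm] using hz)
      have hdz := hden z hz
      rw [hg]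
      simp only
      rw [norm_div, div_le_one (norm_pos_iff.mpr hdz)]
      have hw : Complex.normSq (f z) ≤ 1 := by
        rw [← Complex.sq_norm]
        nlinarith [norm_nonneg (f z)]
      have hbn : Complex.normSq b ≤ 1 := by
        rw [← Complex.sq_norm]
        nlinarith [norm_nonneg b]
      have key : Complex.normSq (f z - b) ≤ Complex.normSq (1 - (starRingEnd ℂ) b * f z) := by
        have e1 := Complex.normSq_sub (f z) b
        have e2 := Complex.normSq_sub 1 ((starRingEnd ℂ) b * f z)
        have e3 : (starRingEnd ℂ) ((starRingEnd ℂ) b * f z) = b * (starRingEnd ℂ) (f z) := by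
          rw [map_mul, Complex.conj_conj]
        have e4 : (b * (starRingEnd ℂ) (f z)).re = (f z * (starRingEnd ℂ) b).re := by
          have : b * (starRingEnd ℂ) (f z) = (starRingEnd ℂ) (f z * (starRingEnd ℂ) b) := by
            rw [map_mul, Complex.conj_conj]; ring
          rw [this, Complex.conj_re]
        rw [e1, e2, e3] at *
        simp only [Complex.normSq_one, Complex.normSq_mul, Complex.normSq_conj, one_mul] at *
        rw [e4]
        nlinarith [mul_nonneg (sub_nonneg.mpr hw) (sub_nonneg.mpr hbn)]
      have h5 : ‖f z - b‖^2 ≤ ‖1 - (starRingEnd ℂ) b * f z‖^2 := by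
        rw [Complex.sq_norm, Complex.sq_norm]
        exact key
      nlinarith [norm_nonneg (f z - b), norm_nonneg (1 - (starRingEnd ℂ) b * f z)]
    have hderiv_le : ‖deriv g 0‖ ≤ 1 := by
      refine le_of_forall_pos_le_add fun ε hε => ?_
      have hmaps : Set.MapsTo g (ball (0:ℂ) 1) (ball (g 0) (1 + ε)) := by
        intro z hz
        rw [hg0, mem_ball, dist_zero_right]
        exact lt_of_le_of_lt (hgle z hz) (by linarith)
      have := Complex.norm_deriv_le_div_of_mapsTo_ball hgd (hmaps.mono_right ball_subset_closedBall) one_pos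
      simpa using this
    have hb2lt : ‖b‖^2 < 1 := by nlinarith [norm_nonneg b]
    have hD0ne : ((1:ℂ) - ((‖b‖^2:ℝ):ℂ)) ≠ 0 := by
      have e : ((1:ℂ) - ((‖b‖^2:ℝ):ℂ)) = (((1 - ‖b‖^2 : ℝ)) : ℂ) := by push_cast; ring
      rw [e]
      exact Complex.ofReal_ne_zero.mpr (by linarith)
    have hgderiv : HasDerivAt g (a 1 / (1 - ((‖b‖^2:ℝ):ℂ))) 0 := by
      have hN : HasDerivAt (fun z => f z - b) (a 1) 0 := hfd.sub_const b
      have hD : HasDerivAt (fun z => 1 - (starRingEnd ℂ) b * f z)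
          (-((starRingEnd ℂ) b * a 1)) 0 := by
        simpa using ((hfd.const_mul ((starRingEnd ℂ) b)).const_sub 1)
      have hD0ne' : 1 - (starRingEnd ℂ) b * f 0 ≠ 0 := hden 0 (by simp)
      have h := hN.div hD hD0ne'
      refine h.congr_deriv ?_
      symm
      rw [hf0, hcb, sub_self, zero_mul, sub_zero]
      rw [div_eq_div_iff hD0ne (pow_ne_zero 2 hD0ne)]
      ring
    have h2 : deriv g 0 = a 1 / (1 - ((‖b‖^2:ℝ):ℂ)) := hgderiv.deriv
    rw [h2, norm_div] at hderiv_le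
    have h3 : ‖((1:ℂ) - ((‖b‖^2:ℝ):ℂ))‖ = 1 - ‖b‖^2 := by
      have e : ((1:ℂ) - ((‖b‖^2:ℝ):ℂ)) = (((1 - ‖b‖^2 : ℝ)) : ℂ) := by push_cast; ring
      rw [e, Complex.norm_real, Real.norm_eq_abs, abs_of_pos (by linarith)]
    rw [h3, div_le_one (by linarith)] at hderiv_le
    exact hderiv_le
  · -- |a 0| = 1 : f constant by max modulus
    have hloc : ∀ᶠ y in nhds (0:ℂ), f y = f 0 := by
      apply Complex.eventually_eq_of_isLocalMax_norm
      · filter_upwards [isOpen_ball.mem_nhds (by simp : (0:ℂ) ∈ ball (0:ℂ) 1)] with z hz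
        exact hdiff.differentiableAt (isOpen_ball.mem_nhds hz)
      · filter_upwards [isOpen_ball.mem_nhds (by simp : (0:ℂ) ∈ ball (0:ℂ) 1)] with z hz
        simp only [Function.comp_apply]
        rw [hf0, h1]
        exact hb z (by simpa [mem_ball, dist_eq_norm] using hz)
    have hconst : HasFPowerSeriesAt (fun _ => f 0) (ofScalars ℂ a) 0 := hat.congr hloc
    have := hconst.eq_formalMultilinearSeries
      (hasFPowerSeriesAt_const (c := f 0) (e := (0:ℂ)))
    have hc1 : (ofScalars ℂ a).coeff 1 = (constFormalMultilinearSeries ℂ ℂ (f 0)).coeff 1 := by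
      rw [this]
    rw [bohr_coeff] at hc1
    have : (constFormalMultilinearSeries ℂ ℂ (f 0)).coeff 1 = 0 := by
      rw [FormalMultilinearSeries.coeff, constFormalMultilinearSeries_apply_of_nonzero one_ne_zero]
      simp
    rw [this] at hc1
    rw [hc1, h1]
    norm_num

set_option maxHeartbeats 1000000 in
lemma bohr_avg (a : ℕ → ℂ) (f : ℂ → ℂ)
    (hf : ∀ z : ℂ, ‖z‖ < 1 → HasSum (fun n => a n * z ^ n) (f z))
    (hb : ∀ z : ℂ, ‖z‖ < 1 → ‖f z‖ ≤ 1)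
    (n : ℕ) (hn : 0 < n) (w : ℂ) (hw : ‖w‖ < 1) :
    ∃ s, HasSum (fun m => a (n * m) * w ^ m) s ∧ ‖s‖ ≤ 1 := by
  obtain ⟨z, hz⟩ := IsAlgClosed.exists_pow_nat_eq w hn
  have hzn : ‖z‖ < 1 := by
    by_contra h
    push_neg at h
    have h2 := pow_le_pow_left₀ (by norm_num : (0:ℝ) ≤ 1) h n
    rw [one_pow, ← norm_pow, hz] at h2
    linarith
  set ω : ℂ := Complex.exp (2 * Real.pi * Complex.I / n) with hωdef
  have hprim : IsPrimitiveRoot ω n := Complex.isPrimitiveRoot_exp n hn.ne'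
  have hω1 : ‖ω‖ = 1 := by
    have h1 : ‖ω‖ ^ n = 1 := by rw [← norm_pow, hprim.pow_eq_one, norm_one]
    rcases lt_trichotomy ‖ω‖ 1 with h | h | h
    · exact absurd h1 (by nlinarith [pow_lt_one₀ (norm_nonneg ω) h hn.ne'])
    · exact h
    · exact absurd h1 (by nlinarith [one_lt_pow₀ h hn.ne'])
  have hnormk : ∀ k : ℕ, ‖ω ^ k * z‖ < 1 := by
    intro k
    rw [norm_mul, norm_pow, hω1, one_pow, one_mul]
    exact hzn
  set T : ℂ := ∑ k ∈ Finset.range n, f (ω ^ k * z) with hT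
  have hsum_k : HasSum (fun j => ∑ k ∈ Finset.range n, a j * (ω ^ k * z) ^ j) T :=
    hasSum_sum fun k _ => hf _ (hnormk k)
  set F : ℕ → ℂ := fun j => a j * z ^ j * ∑ k ∈ Finset.range n, (ω ^ j) ^ k with hFdef
  have hFsum : HasSum F T := by
    refine hsum_k.congr_fun fun j => ?_
    rw [hFdef]
    simp only
    rw [Finset.mul_sum]
    refine Finset.sum_congr rfl fun k _ => ?_
    rw [mul_pow, ← pow_mul, mul_comm j k, pow_mul]
    ring
  have hF0 : ∀ j, ¬ (n ∣ j) → F j = 0 := by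
    intro j hdvd
    have hne : ω ^ j ≠ 1 := fun h => hdvd ((hprim.pow_eq_one_iff_dvd j).mp h)
    have hpow : (ω ^ j) ^ n = 1 := by
      rw [← pow_mul, mul_comm j n, pow_mul, hprim.pow_eq_one, one_pow]
    rw [hFdef]
    simp only
    rw [geom_sum_eq hne, hpow, sub_self, zero_div, mul_zero]
  have hinj : Function.Injective (fun m : ℕ => n * m) := fun m1 m2 h =>
    Nat.eq_of_mul_eq_mul_left hn h
  have hcomp : HasSum (fun m => F (n * m)) T := by
    refine (Function.Injective.hasSum_iff hinj ?_).mpr hFsum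
    intro j hj
    apply hF0
    rintro ⟨m, hm⟩
    exact hj ⟨m, hm.symm⟩
  have hFnm : ∀ m, F (n * m) = (n : ℂ) * (a (n * m) * w ^ m) := by
    intro m
    have hω : ω ^ (n * m) = 1 := by rw [pow_mul, hprim.pow_eq_one, one_pow]
    have hzw : z ^ (n * m) = w ^ m := by rw [pow_mul, hz]
    rw [hFdef]
    simp only
    rw [hω, hzw]
    simp [Finset.sum_const]
    ring
  have hcomp2 : HasSum (fun m => (n : ℂ) * (a (n * m) * w ^ m)) T := by
    refine hcomp.congr_fun fun m => (hFnm m).symm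
  have hnne : (n : ℂ) ≠ 0 := Nat.cast_ne_zero.mpr hn.ne'
  refine ⟨T / n, ?_, ?_⟩
  · have := hcomp2.div_const (n : ℂ)
    refine this.congr_fun fun m => ?_
    field_simp
  · rw [norm_div, Complex.norm_natCast]
    have hTn : ‖T‖ ≤ n := by
      calc ‖T‖ ≤ ∑ k ∈ Finset.range n, ‖f (ω ^ k * z)‖ := norm_sum_le _ _
        _ ≤ ∑ k ∈ Finset.range n, 1 := Finset.sum_le_sum fun k _ => hb _ (hnormk k)
        _ = n := by simp
    rw [div_le_one (by exact_mod_cast hn)]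
    simpa using hTn

lemma bohr_coeff_bound (a : ℕ → ℂ) (f : ℂ → ℂ)
    (hf : ∀ z : ℂ, ‖z‖ < 1 → HasSum (fun n => a n * z ^ n) (f z))
    (hb : ∀ z : ℂ, ‖z‖ < 1 → ‖f z‖ ≤ 1)
    (n : ℕ) (hn : 0 < n) : ‖a n‖ ≤ 1 - ‖a 0‖ ^ 2 := by
  set b : ℕ → ℂ := fun m => a (n * m) with hbdef
  set h : ℂ → ℂ := fun w => ∑' m, b m * w ^ m with hh
  have hsum : ∀ w : ℂ, ‖w‖ < 1 → HasSum (fun m => b m * w ^ m) (h w) := by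
    intro w hw
    obtain ⟨s, hs, _⟩ := bohr_avg a f hf hb n hn w hw
    rw [hh]
    simp only
    rw [hs.tsum_eq]
    exact hs
  have hble : ∀ w : ℂ, ‖w‖ < 1 → ‖h w‖ ≤ 1 := by
    intro w hw
    obtain ⟨s, hs, hs1⟩ := bohr_avg a f hf hb n hn w hw
    rw [hh]
    simp only
    rw [hs.tsum_eq]
    exact hs1
  have hkey := bohr_key b h hsum hble
  rw [hbdef] at hkey
  simpa [mul_one] using hkey

set_option maxHeartbeats 1000000 in
/-- Bohr's theorem: if `f(z) = Σ aₙ zⁿ` on the unit disk and `|f| ≤ 1` there,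
then `Σ |aₙ| rⁿ ≤ 1` for `0 ≤ r ≤ 1/3`. -/
theorem bohr_theorem (a : ℕ → ℂ) (f : ℂ → ℂ)
    (hf : ∀ z : ℂ, ‖z‖ < 1 → HasSum (fun n => a n * z ^ n) (f z))
    (hb : ∀ z : ℂ, ‖z‖ < 1 → ‖f z‖ ≤ 1)
    (r : ℝ) (hr0 : 0 ≤ r) (hr : r ≤ 1 / 3) :
    ∑' n : ℕ, ‖a n‖ * r ^ n ≤ 1 := by
  have hf0 : f 0 = a 0 := by
    have h := (hf 0 (by simp)).unique (hasSum_single (f := fun n => a n * (0:ℂ)^n) 0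
      (by intro m hm; simp [zero_pow hm]))
    simp only [pow_zero, mul_one] at h; exact h
  have ha0 : ‖a 0‖ ≤ 1 := hf0 ▸ hb 0 (by simp)
  have ha0' : 0 ≤ ‖a 0‖ := norm_nonneg _
  set t := ‖a 0‖ with ht
  have hcb : ∀ n : ℕ, 0 < n → ‖a n‖ ≤ 1 - t ^ 2 := fun n hn =>
    bohr_coeff_bound a f hf hb n hn
  have ht2 : 0 ≤ 1 - t ^ 2 := by nlinarith
  have hr1 : r < 1 := by linarith
  have hgeom : Summable (fun n : ℕ => r ^ n) := summable_geometric_of_lt_one hr0 hr1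
  have htail_geom : Summable (fun n : ℕ => (1 - t ^ 2) * r ^ (n + 1)) := by
    apply Summable.mul_left
    exact (summable_nat_add_iff 1).mpr hgeom
  have hsummand_le : ∀ n : ℕ, ‖a (n + 1)‖ * r ^ (n + 1) ≤ (1 - t ^ 2) * r ^ (n + 1) :=
    fun n => mul_le_mul_of_nonneg_right (hcb (n + 1) n.succ_pos) (by positivity)
  have hsumm : Summable (fun n : ℕ => ‖a n‖ * r ^ n) := by
    refine Summable.of_nonneg_of_le (fun n => by positivity)
      (fun n => ?_) (hgeom.mul_left 1)
    apply mul_le_mul_of_nonneg_right _ (by positivity)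
    cases n with
    | zero => exact ha0
    | succ m => nlinarith [hcb (m + 1) m.succ_pos, sq_nonneg t]
  have htail : Summable (fun n : ℕ => ‖a (n + 1)‖ * r ^ (n + 1)) :=
    (summable_nat_add_iff 1).mpr hsumm
  rw [hsumm.tsum_eq_zero_add]
  have h1 : ∑' n : ℕ, ‖a (n + 1)‖ * r ^ (n + 1) ≤ (1 - t ^ 2) * (r / (1 - r)) := by
    calc ∑' n : ℕ, ‖a (n + 1)‖ * r ^ (n + 1)
        ≤ ∑' n : ℕ, (1 - t ^ 2) * r ^ (n + 1) := Summable.tsum_le_tsum hsummand_le htail htail_geom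
      _ = (1 - t ^ 2) * ∑' n : ℕ, r ^ (n + 1) := tsum_mul_left
      _ = (1 - t ^ 2) * (r / (1 - r)) := by
          congr 1
          have : ∀ n : ℕ, r ^ (n + 1) = r * r ^ n := fun n => by ring
          rw [tsum_congr this, tsum_mul_left, tsum_geometric_of_lt_one hr0 hr1]
          field_simp
  have hq : r / (1 - r) ≤ 1 / 2 := by
    rw [div_le_div_iff₀ (by linarith) (by norm_num)]
    linarith
  have h2 : (1 - t ^ 2) * (r / (1 - r)) ≤ (1 - t ^ 2) * (1 / 2) :=
    mul_le_mul_of_nonneg_left hq ht2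
  have h0 : ‖a 0‖ * r ^ 0 = t := by simp [ht]
  rw [h0]
  nlinarith [h1, h2]
end

section
/- The constant 1/3 in Bohr's theorem is sharp: for every r > 1/3 there exists a function f(z) = Σ aₙzⁿ analytic on the unit disk with |f(z)| ≤ 1 on the disk, such that Σ |aₙ| rⁿ > 1. -/
/-- Sharpness of the Bohr radius `1/3`: for every `1/3 < r < 1` there is an
analytic `f` on the unit disk, bounded by `1`, with majorant exceeding `1` at `r`. -/
theorem bohr_radius_sharp (r : ℝ) (hr : 1 / 3 < r) (hr1 : r < 1) :
    ∃ (a : ℕ → ℂ) (f : ℂ → ℂ),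
      (∀ z : ℂ, ‖z‖ < 1 → HasSum (fun n => a n * z ^ n) (f z)) ∧
      (∀ z : ℂ, ‖z‖ < 1 → ‖f z‖ ≤ 1) ∧
      1 < ∑' n : ℕ, ‖a n‖ * r ^ n := by
  have hr0 : (0 : ℝ) < r := lt_trans (by norm_num) hr
  obtain ⟨a, ha0, ha1, key⟩ : ∃ a : ℝ, 0 < a ∧ a < 1 ∧ 1 - r < 2 * r * a := by
    refine ⟨((1 - r) / (2 * r) + 1) / 2, ?_, ?_, ?_⟩
    · have : 0 < (1 - r) / (2 * r) := div_pos (by linarith) (by linarith)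
      linarith
    · have : (1 - r) / (2 * r) < 1 := by rw [div_lt_one (by linarith)]; linarith
      linarith
    · have h1 : (1 - r) / (2 * r) < ((1 - r) / (2 * r) + 1) / 2 := by
        have : (1 - r) / (2 * r) < 1 := by rw [div_lt_one (by linarith)]; linarith
        linarith
      calc 1 - r = 2 * r * ((1 - r) / (2 * r)) := by field_simp
      _ < 2 * r * (((1 - r) / (2 * r) + 1) / 2) :=
          mul_lt_mul_of_pos_left h1 (by linarith)
  have hden : ∀ z : ℂ, ‖z‖ < 1 → (1 : ℂ) - (a : ℂ) * z ≠ 0 := by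
    intro z hz h
    have h1 : ‖(1 : ℂ)‖ = ‖(a : ℂ) * z‖ := by
      rw [show (1 : ℂ) = (a : ℂ) * z by linear_combination h]
    rw [norm_one, norm_mul, Complex.norm_real, Real.norm_eq_abs, abs_of_pos ha0] at h1
    nlinarith [norm_nonneg z]
  refine ⟨fun n => match n with
    | 0 => (a : ℂ)
    | (n + 1) => ((a : ℂ) ^ 2 - 1) * (a : ℂ) ^ n,
    fun z => ((a : ℂ) - z) / (1 - (a : ℂ) * z), ?_, ?_, ?_⟩
  · intro z hz
    have haz : ‖(a : ℂ) * z‖ < 1 := by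
      rw [norm_mul, Complex.norm_real, Real.norm_eq_abs, abs_of_pos ha0]
      nlinarith [norm_nonneg z]
    have hd := hden z hz
    have hgeo := hasSum_geometric_of_norm_lt_one haz
    have h2 : HasSum (fun n : ℕ => (((a : ℂ) ^ 2 - 1) * z) * ((a : ℂ) * z) ^ n)
        ((((a : ℂ) ^ 2 - 1) * z) * (1 - (a : ℂ) * z)⁻¹) := hgeo.mul_left _
    set c : ℕ → ℂ := fun n => (match n with
      | 0 => (a : ℂ)
      | (n + 1) => ((a : ℂ) ^ 2 - 1) * (a : ℂ) ^ n) * z ^ n with hc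
    have heq : (fun n : ℕ => c (n + 1)) =
        fun n : ℕ => (((a : ℂ) ^ 2 - 1) * z) * ((a : ℂ) * z) ^ n := by
      funext n; simp only [hc]; ring
    have h3 : HasSum c ((((a : ℂ) ^ 2 - 1) * z) * (1 - (a : ℂ) * z)⁻¹
        + ∑ i ∈ Finset.range 1, c i) := by
      rw [← hasSum_nat_add_iff 1, heq]; exact h2
    convert h3 using 1
    simp only [Finset.range_one, Finset.sum_singleton, hc]
    field_simp
    ring
  · intro z hz
    have hz2 : Complex.normSq z < 1 := by
      have h1 : ‖z‖ < 1 := hz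
      nlinarith [Complex.sq_norm z, norm_nonneg z]
    have hd := hden z hz
    rw [norm_div, div_le_one (norm_pos_iff.mpr hd)]
    have hsq : ‖(a : ℂ) - z‖ ^ 2 ≤ ‖1 - (a : ℂ) * z‖ ^ 2 := by
      rw [Complex.sq_norm, Complex.sq_norm]
      simp only [Complex.normSq_apply, Complex.sub_re, Complex.sub_im,
        Complex.mul_re, Complex.mul_im, Complex.one_re, Complex.one_im,
        Complex.ofReal_re, Complex.ofReal_im]
      have hz2' : z.re * z.re + z.im * z.im < 1 := by
        have := Complex.normSq_apply z; linarith [hz2, this.symm.trans_lt hz2]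
      nlinarith [mul_nonneg (by nlinarith : (0:ℝ) ≤ 1 - a^2) (by linarith : (0:ℝ) ≤ 1 - (z.re*z.re+z.im*z.im))]
    nlinarith [norm_nonneg ((a : ℂ) - z), norm_nonneg (1 - (a : ℂ) * z)]
  · have har : a * r < 1 := by nlinarith
    have hgeo := hasSum_geometric_of_lt_one (by positivity : (0:ℝ) ≤ a * r) har
    set g : ℕ → ℝ := fun n => ‖(match n with
      | 0 => (a : ℂ)
      | (n + 1) => ((a : ℂ) ^ 2 - 1) * (a : ℂ) ^ n : ℂ)‖ * r ^ n with hg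
    have hcoef : ‖((a : ℂ) ^ 2 - 1)‖ = 1 - a ^ 2 := by
      rw [show ((a : ℂ) ^ 2 - 1) = ((a ^ 2 - 1 : ℝ) : ℂ) by push_cast; ring,
        Complex.norm_real, Real.norm_eq_abs, abs_of_neg (by nlinarith)]
      ring
    have hnorm : ∀ n, g (n + 1) = ((1 - a ^ 2) * r) * (a * r) ^ n := by
      intro n
      show ‖((a : ℂ) ^ 2 - 1) * (a : ℂ) ^ n‖ * r ^ (n + 1) = _
      rw [norm_mul, norm_pow, hcoef, Complex.norm_real, Real.norm_eq_abs, abs_of_pos ha0,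
        mul_pow]
      ring
    have h2 : HasSum (fun n => g (n + 1)) (((1 - a ^ 2) * r) * (1 - a * r)⁻¹) := by
      have := hgeo.mul_left ((1 - a ^ 2) * r)
      rw [show (fun n => g (n + 1)) = fun n => (1 - a ^ 2) * r * (a * r) ^ n from funext hnorm]
      exact this
    have h3 : HasSum g (((1 - a ^ 2) * r) * (1 - a * r)⁻¹ + ∑ i ∈ Finset.range 1, g i) :=
      (hasSum_nat_add_iff 1).mp h2
    rw [h3.tsum_eq]
    have hg0 : ∑ i ∈ Finset.range 1, g i = a := by
      rw [Finset.sum_range_one]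
      show ‖((a : ℝ) : ℂ)‖ * r ^ 0 = a
      simp [Complex.norm_real, Real.norm_eq_abs, abs_of_pos ha0]
    rw [hg0, ← sub_pos]
    have har0 : 0 < 1 - a * r := by linarith
    have expand : (1 - a ^ 2) * r * (1 - a * r)⁻¹ + a - 1
        = ((1 - a ^ 2) * r - (1 - a) * (1 - a * r)) * (1 - a * r)⁻¹ := by
      field_simp
      ring
    rw [expand]
    apply mul_pos _ (by positivity)
    nlinarith
end

section
/- If f(z) = Σ aₙzⁿ is analytic in the unit disk with |f(z)| ≤ 1 on the disk, then for every k ≥ 0 and every z with |z| ≤ 1/2, the k-th partial sum satisfies |Σ_{n=0}^{k} aₙ zⁿ| ≤ 1. -/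
open Complex MeasureTheory intervalIntegral Finset Real Filter

lemma exp_orth (j : ℤ) (hj : j ≠ 0) :
    ∫ θ in (0:ℝ)..(2*π), Complex.exp ((j:ℂ) * I * θ) = 0 := by
  rw [integral_exp_mul_complex (by simp [hj] : ((j:ℂ) * I) ≠ 0)]
  have h1 : (j:ℂ) * I * (2*π:ℝ) = j * (2*π*I) := by push_cast; ring
  rw [h1, Complex.exp_int_mul_two_pi_mul_I]
  simp

lemma exp_orth' (j : ℤ) :
    ∫ θ in (0:ℝ)..(2*π), Complex.exp ((j:ℂ) * I * θ) = if j = 0 then (2*π:ℝ) else 0 := by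
  by_cases h : j = 0
  · simp [h]
  · simp [h, exp_orth j h]

lemma term_integral (c : ℂ) (r : ℝ) (n : ℕ) (j : ℤ) :
    (∫ θ in (0:ℝ)..(2*π), c * ((r:ℂ) * Complex.exp (θ * I))^n * Complex.exp ((j:ℂ) * I * θ))
    = if (n:ℤ) + j = 0 then (2*π:ℝ) * c * (r:ℂ)^n else 0 := by
  have key : ∀ θ : ℝ, c * ((r:ℂ) * Complex.exp (θ * I))^n * Complex.exp ((j:ℂ) * I * θ)
      = (c * (r:ℂ)^n) * Complex.exp ((((n:ℤ)+j : ℤ):ℂ) * I * θ) := by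
    intro θ
    rw [mul_pow, ← Complex.exp_nat_mul, mul_comm ((n:ℂ)) ((θ:ℂ)*I),
      show c * ((r:ℂ)^n * Complex.exp ((θ:ℂ)*I*n)) * Complex.exp ((j:ℂ) * I * θ)
        = (c * (r:ℂ)^n) * (Complex.exp ((θ:ℂ)*I*n) * Complex.exp ((j:ℂ) * I * θ)) from by ring,
      ← Complex.exp_add]
    congr 2
    push_cast
    ring
  simp_rw [key]
  rw [intervalIntegral.integral_const_mul, exp_orth' ((n:ℤ)+j)]
  by_cases h : (n:ℤ) + j = 0 <;> simp [h] <;> ring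

lemma summable_coeff {a : ℕ → ℂ} {f : ℂ → ℂ}
    (hf : ∀ z : ℂ, ‖z‖ < 1 → HasSum (fun n => a n * z ^ n) (f z))
    {r : ℝ} (hr0 : 0 ≤ r) (hr1 : r < 1) : Summable (fun n => ‖a n‖ * r ^ n) := by
  set r' : ℝ := (1+r)/2 with hr'
  have hrr' : r < r' := by rw [hr']; linarith
  have hr'1 : r' < 1 := by rw [hr']; linarith
  have hr'0 : 0 < r' := by rw [hr']; linarith
  have hsum : Summable (fun n => a n * (r':ℂ) ^ n) := by
    refine (hf (r':ℂ) ?_).summable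
    simpa [Complex.norm_real, abs_of_pos hr'0] using hr'1
  have hten : Tendsto (fun n => ‖a n‖ * r' ^ n) atTop (nhds 0) := by
    have := hsum.tendsto_atTop_zero.norm
    simpa [norm_mul, norm_pow, Complex.norm_real, abs_of_pos hr'0] using this
  obtain ⟨C, hC⟩ := hten.bddAbove_range
  have hC' : ∀ n, ‖a n‖ * r' ^ n ≤ C := fun n => hC ⟨n, rfl⟩
  have hCnn : 0 ≤ C := le_trans (by positivity) (hC' 0)
  refine Summable.of_nonneg_of_le (fun n => by positivity)
    (fun n => ?_) (((summable_geometric_of_lt_one (r := r/r') (by positivity) ?_).mul_left C))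
  · have : ‖a n‖ * r ^ n = (‖a n‖ * r' ^ n) * (r/r') ^ n := by
      field_simp
      rw [mul_assoc, ← mul_pow, mul_div_assoc', mul_div_cancel_left₀ r hr'0.ne']
    rw [this]
    apply mul_le_mul_of_nonneg_right (hC' n) (by positivity)
  · rw [div_lt_one hr'0]; exact hrr'

lemma hasSum_swap {a : ℕ → ℂ} {f : ℂ → ℂ}
    (hf : ∀ z : ℂ, ‖z‖ < 1 → HasSum (fun n => a n * z ^ n) (f z))
    {r : ℝ} (hr0 : 0 < r) (hr1 : r < 1)
    (hsum : Summable (fun n => ‖a n‖ * r ^ n)) (j : ℤ) :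
    HasSum (fun n : ℕ => ∫ θ in (0:ℝ)..(2*π),
        a n * ((r:ℂ) * Complex.exp (θ * I))^n * Complex.exp ((j:ℂ) * I * θ))
      (∫ θ in (0:ℝ)..(2*π), f ((r:ℂ) * Complex.exp (θ * I)) * Complex.exp ((j:ℂ) * I * θ)) := by
  apply intervalIntegral.hasSum_integral_of_dominated_convergence
    (bound := fun n (_ : ℝ) => ‖a n‖ * r ^ n)
  · intro n
    apply Continuous.aestronglyMeasurable
    fun_prop
  · intro n
    filter_upwards with θ _
    simp [norm_mul, norm_pow, Complex.norm_exp, abs_of_pos hr0, mul_comm]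
  · filter_upwards with θ _
    exact hsum
  · exact intervalIntegrable_const
  · filter_upwards with θ _
    refine (hf _ ?_).mul_right _
    simp [norm_mul, Complex.norm_exp, abs_of_pos hr0, hr1]

lemma kernel_pos (u : ℂ) (hu : ‖u‖ ≤ 1/2) (k : ℕ) :
    0 ≤ 1 + 2 * (∑ n ∈ Finset.range k, u ^ (n+1)).re := by
  rcases Nat.eq_zero_or_pos k with hk | hk
  · simp [hk]
  set S : ℂ := ∑ n ∈ Finset.range k, u ^ (n+1) with hS
  have hu1 : u ≠ 1 := by
    intro h; rw [h] at hu; norm_num at hu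
  have hns : 0 < Complex.normSq (1 - u) := by
    rw [Complex.normSq_pos]
    intro h
    exact hu1 (by linear_combination -h)
  have hid : (1 + 2*S) * (1 - u) = 1 + u - 2 * u^(k+1) := by
    have hgeom : (∑ n ∈ Finset.range k, u ^ n) * (1 - u) = 1 - u ^ k := by
      have := geom_sum_mul u k
      linear_combination -this
    have : S = u * ∑ n ∈ Finset.range k, u ^ n := by
      rw [hS, Finset.mul_sum]
      exact Finset.sum_congr rfl (fun n _ => by ring)
    rw [this]
    linear_combination (2*u) * hgeom
  have key : ((1+2*S) * ((1-u) * (starRingEnd ℂ) (1-u))).re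
      = (1 + 2*S.re) * Complex.normSq (1-u) := by
    rw [Complex.mul_conj]
    simp [Complex.mul_re, Complex.ofReal_im]
  have hbound : 0 ≤ ((1 + u - 2 * u^(k+1)) * (starRingEnd ℂ) (1-u)).re := by
    have e1 : ((1 + u - 2 * u^(k+1)) * (starRingEnd ℂ) (1-u)).re
        = ((1 + u) * (starRingEnd ℂ) (1-u)).re - ((2 * u^(k+1)) * (starRingEnd ℂ) (1-u)).re := by
      rw [sub_mul, Complex.sub_re]
    have e2 : ((1 + u) * (starRingEnd ℂ) (1-u)).re = 1 - Complex.normSq u := by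
      simp [Complex.mul_re, Complex.normSq_apply, Complex.add_re, Complex.sub_re,
        Complex.conj_re, Complex.conj_im]
      ring
    have e3 : ((2 * u^(k+1)) * (starRingEnd ℂ) (1-u)).re ≤ 2 * (‖u‖^(k+1) * (1 + ‖u‖)) := by
      calc ((2 * u^(k+1)) * (starRingEnd ℂ) (1-u)).re
          ≤ ‖(2 * u^(k+1)) * (starRingEnd ℂ) (1-u)‖ := Complex.re_le_norm _
        _ = 2 * (‖u‖^(k+1) * ‖1 - u‖) := by
            rw [norm_mul, norm_mul, norm_pow, RCLike.norm_conj]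
            simp
            ring
        _ ≤ 2 * (‖u‖^(k+1) * (1 + ‖u‖)) := by
            gcongr
            exact (norm_sub_le 1 u).trans (by simp)
    rw [e1, e2]
    have hnsq : Complex.normSq u = ‖u‖^2 := by
      rw [Complex.normSq_eq_norm_sq]
    have hpow : ‖u‖^(k+1) ≤ ‖u‖^2 :=
      pow_le_pow_of_le_one (norm_nonneg u) (hu.trans (by norm_num)) (by omega)
    have h0 : (0:ℝ) ≤ ‖u‖ := norm_nonneg u
    nlinarith [e3, hpow, hu, h0]
  have hid2 : (1+2*S) * ((1-u) * (starRingEnd ℂ) (1-u))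
      = (1 + u - 2 * u^(k+1)) * (starRingEnd ℂ) (1-u) := by
    rw [← mul_assoc, hid]
  rw [← hid2, key] at hbound
  nlinarith [hbound, hns]

-- Kc rewriting lemma
lemma Kc_real (w : ℂ) (k : ℕ) (θ : ℝ) :
    1 + ∑ n ∈ Finset.range k, (w^(n+1) * Complex.exp (((-(n+1:ℕ) : ℤ):ℂ) * I * θ)
        + ((starRingEnd ℂ) w)^(n+1) * Complex.exp ((((n+1:ℕ) : ℤ):ℂ) * I * θ))
    = ((1 + 2 * (∑ n ∈ Finset.range k, (w * Complex.exp (-(θ * I)))^(n+1)).re : ℝ) : ℂ) := by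
  have hterm : ∀ n : ℕ, (w * Complex.exp (-((θ:ℂ) * I)))^(n+1)
      = w^(n+1) * Complex.exp (((-(n+1:ℕ) : ℤ):ℂ) * I * θ) := by
    intro n
    rw [mul_pow, ← Complex.exp_nat_mul]
    congr 2
    push_cast
    ring
  have hconj : ∀ n : ℕ, (starRingEnd ℂ) (w^(n+1) * Complex.exp (((-(n+1:ℕ) : ℤ):ℂ) * I * θ))
      = ((starRingEnd ℂ) w)^(n+1) * Complex.exp ((((n+1:ℕ) : ℤ):ℂ) * I * θ) := by
    intro n
    rw [map_mul, map_pow, ← Complex.exp_conj]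
    congr 2
    simp [map_mul, Complex.conj_I, Complex.conj_ofReal]
    push_cast
    ring
  have : ∑ n ∈ Finset.range k, (w^(n+1) * Complex.exp (((-(n+1:ℕ) : ℤ):ℂ) * I * θ)
        + ((starRingEnd ℂ) w)^(n+1) * Complex.exp ((((n+1:ℕ) : ℤ):ℂ) * I * θ))
      = (∑ n ∈ Finset.range k, (w * Complex.exp (-((θ:ℂ) * I)))^(n+1))
        + (starRingEnd ℂ) (∑ n ∈ Finset.range k, (w * Complex.exp (-((θ:ℂ) * I)))^(n+1)) := by
    rw [map_sum, ← Finset.sum_add_distrib]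
    refine Finset.sum_congr rfl (fun n _ => ?_)
    rw [hterm, hconj]
  rw [this, Complex.add_conj]
  push_cast
  ring

lemma rog_fourier_neg {a : ℕ → ℂ} {f : ℂ → ℂ}
    (hf : ∀ z : ℂ, ‖z‖ < 1 → HasSum (fun n => a n * z ^ n) (f z))
    {r : ℝ} (hr0 : 0 < r) (hr1 : r < 1)
    (hsum : Summable (fun n => ‖a n‖ * r ^ n)) (m : ℕ) :
    (∫ θ in (0:ℝ)..(2*π), f ((r:ℂ) * Complex.exp (θ * I)) * Complex.exp (((-(m:ℤ)):ℂ) * I * θ))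
      = (2*π:ℝ) * a m * (r:ℂ)^m := by
  have h := hasSum_swap hf hr0 hr1 hsum (-(m:ℤ))
  have h2 : (fun n : ℕ => ∫ θ in (0:ℝ)..(2*π),
      a n * ((r:ℂ) * Complex.exp (θ * I))^n * Complex.exp ((((-(m:ℤ)):ℤ):ℂ) * I * θ))
      = fun n : ℕ => if n = m then (2*π:ℝ) * a m * (r:ℂ)^m else 0 := by
    funext n
    rw [term_integral]
    by_cases h : n = m <;> simp [h, sub_eq_zero]
    omega
  rw [h2] at h
  have h3 := hasSum_ite_eq m ((2*π:ℝ) * a m * (r:ℂ)^m)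
  have := h.unique h3
  rw [← this]
  norm_num

lemma rog_fourier_pos {a : ℕ → ℂ} {f : ℂ → ℂ}
    (hf : ∀ z : ℂ, ‖z‖ < 1 → HasSum (fun n => a n * z ^ n) (f z))
    {r : ℝ} (hr0 : 0 < r) (hr1 : r < 1)
    (hsum : Summable (fun n => ‖a n‖ * r ^ n)) (m : ℕ) (hm : 0 < m) :
    (∫ θ in (0:ℝ)..(2*π), f ((r:ℂ) * Complex.exp (θ * I)) * Complex.exp (((m:ℤ):ℂ) * I * θ))
      = 0 := by
  have h := hasSum_swap hf hr0 hr1 hsum (m:ℤ)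
  have h2 : (fun n : ℕ => ∫ θ in (0:ℝ)..(2*π),
      a n * ((r:ℂ) * Complex.exp (θ * I))^n * Complex.exp ((((m:ℤ)):ℂ) * I * θ))
      = fun _ : ℕ => (0:ℂ) := by
    funext n
    rw [term_integral]
    have : ¬ ((n:ℤ) + m = 0) := by omega
    simp [this]
  rw [h2] at h
  exact h.unique hasSum_zero

set_option maxHeartbeats 2000000 in
lemma rog_strict {a : ℕ → ℂ} {f : ℂ → ℂ}
    (hf : ∀ z : ℂ, ‖z‖ < 1 → HasSum (fun n => a n * z ^ n) (f z))
    (hb : ∀ z : ℂ, ‖z‖ < 1 → ‖f z‖ ≤ 1)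
    (k : ℕ) (z : ℂ) (hz : ‖z‖ < 1 / 2) :
    ‖∑ n ∈ Finset.range (k + 1), a n * z ^ n‖ ≤ 1 := by
  have hπ : (0:ℝ) < π := Real.pi_pos
  obtain ⟨r, hrdef⟩ : ∃ r : ℝ, r = max (2*‖z‖) (1/2) := ⟨_, rfl⟩
  have hr0 : 0 < r := hrdef ▸ lt_of_lt_of_le (by norm_num) (le_max_right _ _)
  have hr1 : r < 1 := hrdef ▸ max_lt (by linarith) (by norm_num)
  have hrz : ‖z‖ ≤ r / 2 := by
    have := le_max_left (2*‖z‖) (1/2)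
    rw [hrdef]
    linarith
  obtain ⟨w, hwdef⟩ : ∃ w' : ℂ, w' = z / (r:ℂ) := ⟨_, rfl⟩
  have hrne : (r:ℂ) ≠ 0 := by
    simp [Complex.ofReal_ne_zero]
    linarith
  have hwz : (r:ℂ) * w = z := by
    rw [hwdef]; field_simp
  have hw : ‖w‖ ≤ 1/2 := by
    rw [hwdef, norm_div, Complex.norm_real, Real.norm_eq_abs, abs_of_pos hr0, div_le_iff₀ hr0]
    linarith
  have hsum := summable_coeff hf hr0.le hr1
  obtain ⟨g, hgdef⟩ : ∃ g' : ℝ → ℂ, g' = fun θ : ℝ => f ((r:ℂ) * Complex.exp (θ * I)) := ⟨_, rfl⟩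
  have hnorm_circ : ∀ θ : ℝ, ‖(r:ℂ) * Complex.exp (θ * I)‖ = r := by
    intro θ
    simp [norm_mul, Complex.norm_real, Real.norm_eq_abs, abs_of_pos hr0,
      Complex.norm_exp]
  have hgb : ∀ θ : ℝ, ‖g θ‖ ≤ 1 := fun θ => by
    rw [hgdef]; exact hb _ (by rw [hnorm_circ]; exact hr1)
  -- measurability of g
  have hg_meas : AEStronglyMeasurable g (volume.restrict (Set.uIoc (0:ℝ) (2*π))) := by
    have hmeas : ∀ N : ℕ, AEStronglyMeasurable
        (fun θ : ℝ => ∑ n ∈ Finset.range N, a n * ((r:ℂ) * Complex.exp (θ * I))^n)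
        (volume.restrict (Set.uIoc (0:ℝ) (2*π))) :=
      fun N => Continuous.aestronglyMeasurable (by fun_prop)
    refine aestronglyMeasurable_of_tendsto_ae atTop hmeas ?_
    filter_upwards with θ
    rw [hgdef]
    exact (hf _ (by rw [hnorm_circ]; exact hr1)).tendsto_sum_nat
  -- integrability of g * exp(j I θ)
  have hgint : ∀ j : ℤ, IntervalIntegrable
      (fun θ : ℝ => g θ * Complex.exp ((j:ℂ) * I * θ)) volume 0 (2*π) := by
    intro j
    apply IntervalIntegrable.mono_fun' (g := fun _ => (1:ℝ)) intervalIntegrable_const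
    · exact hg_meas.mul (Continuous.aestronglyMeasurable (by fun_prop))
    · filter_upwards with θ
      have : ‖g θ * Complex.exp ((j:ℂ) * I * θ)‖ = ‖g θ‖ := by
        rw [norm_mul]
        simp [Complex.norm_exp]
      simp only [norm_norm, this]
      exact hgb θ
  -- the kernel
  obtain ⟨S, hSdef⟩ : ∃ S' : ℝ → ℂ,
      S' = fun θ : ℝ => ∑ n ∈ Finset.range k, (w * Complex.exp (-(θ * I)))^(n+1) := ⟨_, rfl⟩
  obtain ⟨KR, hKRdef⟩ : ∃ K' : ℝ → ℝ, K' = fun θ => 1 + 2 * (S θ).re := ⟨_, rfl⟩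
  obtain ⟨Kc, hKcdef⟩ : ∃ K' : ℝ → ℂ, K' = fun θ : ℝ => 1 + ∑ n ∈ Finset.range k,
      (w^(n+1) * Complex.exp (((-(n+1:ℕ) : ℤ):ℂ) * I * θ)
        + ((starRingEnd ℂ) w)^(n+1) * Complex.exp ((((n+1:ℕ) : ℤ):ℂ) * I * θ)) := ⟨_, rfl⟩
  have hKcKR : ∀ θ : ℝ, Kc θ = ((KR θ : ℝ) : ℂ) := by
    intro θ
    simp only [hKcdef, hKRdef, hSdef]
    exact Kc_real w k θ
  have hKRpos : ∀ θ : ℝ, 0 ≤ KR θ := by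
    intro θ
    simp only [hKRdef, hSdef]
    apply kernel_pos
    rw [norm_mul]
    calc ‖w‖ * ‖Complex.exp (-((θ:ℂ) * I))‖ = ‖w‖ := by
          simp [Complex.norm_exp]
      _ ≤ 1/2 := hw
  -- continuity of Kc
  have hKc_cont : Continuous Kc := by
    rw [hKcdef]
    fun_prop
  have hKR_cont : Continuous KR := by
    rw [hKRdef, hSdef]
    fun_prop
  -- ∫ Kc = 2π
  have hKc_int : (∫ θ in (0:ℝ)..(2*π), Kc θ) = (2*π:ℝ) := by
    have hIsum : IntervalIntegrable (fun θ : ℝ => ∑ n ∈ Finset.range k,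
        (w^(n+1) * Complex.exp (((-(n+1:ℕ) : ℤ):ℂ) * I * θ)
        + ((starRingEnd ℂ) w)^(n+1) * Complex.exp ((((n+1:ℕ) : ℤ):ℂ) * I * θ)))
        volume 0 (2*π) := Continuous.intervalIntegrable (by fun_prop) _ _
    have : (∫ θ in (0:ℝ)..(2*π), Kc θ) = (∫ θ in (0:ℝ)..(2*π), ((1:ℂ) +
        ∑ n ∈ Finset.range k, (w^(n+1) * Complex.exp (((-(n+1:ℕ) : ℤ):ℂ) * I * θ)
        + ((starRingEnd ℂ) w)^(n+1) * Complex.exp ((((n+1:ℕ) : ℤ):ℂ) * I * θ)))) := by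
      rw [hKcdef]
    rw [this, intervalIntegral.integral_add intervalIntegrable_const hIsum,
      intervalIntegral.integral_finset_sum
        (fun n _ => ((Continuous.intervalIntegrable (by fun_prop) _ _)))]
    have hz1 : ∀ n : ℕ, (∫ θ in (0:ℝ)..(2*π),
        (w^(n+1) * Complex.exp (((-(n+1:ℕ) : ℤ):ℂ) * I * θ)
        + ((starRingEnd ℂ) w)^(n+1) * Complex.exp ((((n+1:ℕ) : ℤ):ℂ) * I * θ))) = 0 := by
      intro n
      rw [intervalIntegral.integral_add ((Continuous.intervalIntegrable (by fun_prop) _ _))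
        ((Continuous.intervalIntegrable (by fun_prop) _ _)),
        intervalIntegral.integral_const_mul, intervalIntegral.integral_const_mul,
        exp_orth _ (by omega), exp_orth _ (by omega)]
      simp
    simp only [hz1]
    simp
  -- ∫ KR = 2π
  have hKR_int : (∫ θ in (0:ℝ)..(2*π), KR θ) = 2*π := by
    have : (∫ θ in (0:ℝ)..(2*π), ((KR θ : ℝ):ℂ)) = ((∫ θ in (0:ℝ)..(2*π), KR θ : ℝ) : ℂ) :=
      intervalIntegral.integral_ofReal
    rw [← funext hKcKR] at this  -- replace by Kc
    rw [hKc_int] at this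
    exact_mod_cast this.symm
  -- ∫ g * Kc = 2π * partial sum
  have hsplit : ∀ θ : ℝ, g θ * Kc θ = g θ * Complex.exp (((0:ℤ):ℂ) * I * θ)
      + ∑ n ∈ Finset.range k,
        (w^(n+1) * (g θ * Complex.exp (((-(n+1:ℕ) : ℤ):ℂ) * I * θ))
          + ((starRingEnd ℂ) w)^(n+1) * (g θ * Complex.exp ((((n+1:ℕ) : ℤ):ℂ) * I * θ))) := by
    intro θ
    simp only [hKcdef, Int.cast_zero, zero_mul, Complex.exp_zero, mul_one]
    rw [mul_add, mul_one, Finset.mul_sum]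
    congr 1
    refine Finset.sum_congr rfl (fun n _ => by ring)
  have hint_main : (∫ θ in (0:ℝ)..(2*π), g θ * Kc θ)
      = (2*π:ℝ) * ∑ n ∈ Finset.range (k+1), a n * z^n := by
    rw [intervalIntegral.integral_congr (g := fun θ => g θ * Complex.exp (((0:ℤ):ℂ) * I * θ)
      + ∑ n ∈ Finset.range k,
        (w^(n+1) * (g θ * Complex.exp (((-(n+1:ℕ) : ℤ):ℂ) * I * θ))
          + ((starRingEnd ℂ) w)^(n+1) * (g θ * Complex.exp ((((n+1:ℕ) : ℤ):ℂ) * I * θ))))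
      (fun θ _ => hsplit θ)]
    have hI1 : IntervalIntegrable (fun θ : ℝ => g θ * Complex.exp (((0:ℤ):ℂ) * I * θ))
        volume 0 (2*π) := hgint 0
    have hIterm : ∀ n : ℕ, IntervalIntegrable (fun θ : ℝ =>
        w^(n+1) * (g θ * Complex.exp (((-(n+1:ℕ) : ℤ):ℂ) * I * θ))
          + ((starRingEnd ℂ) w)^(n+1) * (g θ * Complex.exp ((((n+1:ℕ) : ℤ):ℂ) * I * θ)))
        volume 0 (2*π) := fun n =>
      IntervalIntegrable.add ((hgint (-(n+1:ℕ))).const_mul _) ((hgint ((n+1:ℕ))).const_mul _)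
    have hI2 : IntervalIntegrable (fun θ : ℝ => ∑ n ∈ Finset.range k,
        (w^(n+1) * (g θ * Complex.exp (((-(n+1:ℕ) : ℤ):ℂ) * I * θ))
          + ((starRingEnd ℂ) w)^(n+1) * (g θ * Complex.exp ((((n+1:ℕ) : ℤ):ℂ) * I * θ))))
        volume 0 (2*π) := by
      have h := IntervalIntegrable.sum (μ := MeasureTheory.volume) (a := 0) (b := 2*π)
        (f := fun (n:ℕ) => fun (θ:ℝ) => w^(n+1) * (g θ * Complex.exp (((-(n+1:ℕ) : ℤ):ℂ) * I * θ))
          + ((starRingEnd ℂ) w)^(n+1) * (g θ * Complex.exp ((((n+1:ℕ) : ℤ):ℂ) * I * θ)))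
        (Finset.range k) (fun n _ => hIterm n)
      have heq : (∑ n ∈ Finset.range k, fun (θ:ℝ) =>
          w^(n+1) * (g θ * Complex.exp (((-(n+1:ℕ) : ℤ):ℂ) * I * θ))
          + ((starRingEnd ℂ) w)^(n+1) * (g θ * Complex.exp ((((n+1:ℕ) : ℤ):ℂ) * I * θ)))
          = fun (θ:ℝ) => ∑ n ∈ Finset.range k,
          (w^(n+1) * (g θ * Complex.exp (((-(n+1:ℕ) : ℤ):ℂ) * I * θ))
          + ((starRingEnd ℂ) w)^(n+1) * (g θ * Complex.exp ((((n+1:ℕ) : ℤ):ℂ) * I * θ))) := by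
        funext θ
        simp only [Finset.sum_apply]
      rwa [heq] at h
    rw [intervalIntegral.integral_add hI1 hI2,
      intervalIntegral.integral_finset_sum (fun n _ => hIterm n)]
    have e0 : (∫ θ in (0:ℝ)..(2*π), g θ * Complex.exp (((0:ℤ):ℂ) * I * θ))
        = (2*π:ℝ) * a 0 := by
      have := rog_fourier_neg hf hr0 hr1 hsum 0
      rw [hgdef]
      simpa using this
    have eterm : ∀ n : ℕ, (∫ θ in (0:ℝ)..(2*π),
        (w^(n+1) * (g θ * Complex.exp (((-(n+1:ℕ) : ℤ):ℂ) * I * θ))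
          + ((starRingEnd ℂ) w)^(n+1) * (g θ * Complex.exp ((((n+1:ℕ) : ℤ):ℂ) * I * θ))))
        = (2*π:ℝ) * (a (n+1) * z^(n+1)) := by
      intro n
      rw [intervalIntegral.integral_add ((hgint (-(n+1:ℕ))).const_mul (w^(n+1)))
        ((hgint ((n+1:ℕ))).const_mul (((starRingEnd ℂ) w)^(n+1))),
        intervalIntegral.integral_const_mul, intervalIntegral.integral_const_mul]
      have h1 := rog_fourier_neg hf hr0 hr1 hsum (n+1)
      have h2 := rog_fourier_pos hf hr0 hr1 hsum (n+1) (by omega)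
      rw [hgdef]
      push_cast at h1 h2 ⊢
      rw [h1, h2, mul_zero, add_zero]
      have hwr : w^(n+1) * (r:ℂ)^(n+1) = z^(n+1) := by
        rw [← mul_pow, mul_comm w, hwz]
      linear_combination (2*(π:ℂ)) * a (n+1) * hwr
    rw [e0]
    simp only [eterm]
    rw [← Finset.mul_sum, Finset.sum_range_succ']
    push_cast
    ring
  -- final bound
  have hgKc_int : IntervalIntegrable (fun θ => g θ * Kc θ) volume 0 (2*π) := by
    apply IntervalIntegrable.mono_fun' (g := fun θ => ‖Kc θ‖)
      (Continuous.intervalIntegrable (by fun_prop) _ _)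
    · exact hg_meas.mul hKc_cont.aestronglyMeasurable
    · filter_upwards with θ
      simp only [norm_norm, norm_mul]
      exact mul_le_of_le_one_left (norm_nonneg _) (hgb θ)
  have hb1 : ‖∫ θ in (0:ℝ)..(2*π), g θ * Kc θ‖ ≤ ∫ θ in (0:ℝ)..(2*π), KR θ := by
    refine (intervalIntegral.norm_integral_le_integral_norm (by positivity)).trans ?_
    apply intervalIntegral.integral_mono_on (by positivity) hgKc_int.norm
      (Continuous.intervalIntegrable hKR_cont _ _)
    intro θ _
    rw [norm_mul, hKcKR θ]
    calc ‖g θ‖ * ‖((KR θ : ℝ):ℂ)‖ ≤ 1 * ‖((KR θ : ℝ):ℂ)‖ :=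
          mul_le_mul_of_nonneg_right (hgb θ) (norm_nonneg _)
      _ = KR θ := by
          rw [one_mul, Complex.norm_real, Real.norm_eq_abs, _root_.abs_of_nonneg (hKRpos θ)]
  rw [hint_main, hKR_int] at hb1
  rw [norm_mul, Complex.norm_real, Real.norm_eq_abs, abs_of_pos (by positivity)] at hb1
  have h2π : (0:ℝ) < 2*π := by linarith
  have := (mul_le_mul_iff_right₀ h2π).mp
    (by linarith [hb1] : (2*π) * ‖∑ n ∈ Finset.range (k + 1), a n * z ^ n‖ ≤ (2*π) * 1)
  linarith [this]


/-- Rogosinski's theorem: if `f(z) = Σ aₙ zⁿ` with `|f| ≤ 1` on the unit disk,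
then every partial sum is bounded by `1` for `|z| ≤ 1/2`. -/
theorem rogosinski_theorem (a : ℕ → ℂ) (f : ℂ → ℂ)
    (hf : ∀ z : ℂ, ‖z‖ < 1 → HasSum (fun n => a n * z ^ n) (f z))
    (hb : ∀ z : ℂ, ‖z‖ < 1 → ‖f z‖ ≤ 1)
    (k : ℕ) (z : ℂ) (hz : ‖z‖ ≤ 1 / 2) :
    ‖∑ n ∈ Finset.range (k + 1), a n * z ^ n‖ ≤ 1 := by
  have hcont : Filter.Tendsto (fun t : ℝ => ‖∑ n ∈ Finset.range (k+1), a n * (((t:ℝ):ℂ)*z)^n‖)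
      (nhdsWithin 1 (Set.Iio 1)) (nhds ‖∑ n ∈ Finset.range (k+1), a n * z^n‖) := by
    have hc : Continuous (fun t : ℝ => ‖∑ n ∈ Finset.range (k+1), a n * (((t:ℝ):ℂ)*z)^n‖) := by
      fun_prop
    have := (hc.tendsto 1).mono_left (nhdsWithin_le_nhds (s := Set.Iio 1))
    simpa using this
  apply le_of_tendsto hcont
  filter_upwards [Ioo_mem_nhdsLT_of_mem (by norm_num : (1:ℝ) ∈ Set.Ioc 0 1)] with t ht
  apply rog_strict hf hb
  have h1 : ‖((t:ℝ):ℂ) * z‖ = t * ‖z‖ := by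
    rw [norm_mul, Complex.norm_real, Real.norm_eq_abs, abs_of_pos ht.1]
  rw [h1]
  nlinarith [ht.1, ht.2, hz, norm_nonneg z]
end

section
/- Let h(z) = Σ bₙzⁿ be analytic in the unit disk and continuous on the closed disk, with sup norm ‖h‖_∞ = sup_{|z|≤1} |h(z)|, and suppose Σ |bₙ| rⁿ ≤ ‖h‖_∞ holds via Bohr's theorem. Then for every Schwarz function φ and every 0 ≤ r ≤ 1/3, M_r(h ∘ φ) ≤ ‖h‖_∞. -/
open Metric Set Finset

/-- Package pointwise power-series convergence into `HasFPowerSeriesOnBall` on the unit ball. -/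
lemma vns_hasFPS {g : ℂ → ℂ} {a : ℕ → ℂ}
    (hg : ∀ z : ℂ, ‖z‖ < 1 → HasSum (fun n => a n * z ^ n) (g z)) :
    HasFPowerSeriesOnBall g
      (fun n => ContinuousMultilinearMap.mkPiRing ℂ (Fin n) (a n)) 0 1 := by
  constructor
  · refine ENNReal.le_of_forall_nnreal_lt fun ρ hρ => ?_
    have hρ1 : (ρ : ℝ) < 1 := by exact_mod_cast hρ
    have hz : ‖((ρ : ℝ) : ℂ)‖ < 1 := by
      simpa [Complex.norm_real, abs_of_nonneg ρ.coe_nonneg] using hρ1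
    have hs : Summable fun n => a n * ((ρ : ℝ) : ℂ) ^ n := (hg _ hz).summable
    apply FormalMultilinearSeries.le_radius_of_summable
    have hs' := summable_norm_iff.mpr hs
    have : (fun n => ‖a n * ((ρ : ℝ) : ℂ) ^ n‖)
        = fun n => ‖ContinuousMultilinearMap.mkPiRing ℂ (Fin n) (a n)‖ * (ρ : ℝ) ^ n := by
      funext n
      simp [ContinuousMultilinearMap.norm_mkPiRing, norm_mul, norm_pow,
        Complex.norm_real, abs_of_nonneg ρ.coe_nonneg]
    rwa [this] at hs'
  · exact one_pos
  · intro y hy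
    have hy1 : ‖y‖ < 1 := by
      rw [Metric.mem_eball, edist_eq_enorm_sub, sub_zero] at hy
      rwa [← ofReal_norm, ENNReal.ofReal_lt_one] at hy
    have := hg y hy1
    simp only [zero_add]
    convert this using 2 with n
    · rfl
    simp [ContinuousMultilinearMap.mkPiRing_apply, smul_eq_mul, mul_comm]

/-- Cauchy estimate for coefficients of a bounded analytic function on the unit disk. -/
lemma vns_coeff_le {g : ℂ → ℂ} {a : ℕ → ℂ} {C : ℝ}
    (hg : ∀ z : ℂ, ‖z‖ < 1 → HasSum (fun n => a n * z ^ n) (g z))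
    (hb : ∀ z : ℂ, ‖z‖ < 1 → ‖g z‖ ≤ C) (n : ℕ) : ‖a n‖ ≤ C := by
  have hfps := vns_hasFPS hg
  have hdiff : DifferentiableOn ℂ g (Metric.eball (0 : ℂ) 1) := hfps.differentiableOn
  have key : ∀ ρ : ℝ, 0 < ρ → ρ < 1 → ‖a n‖ * ρ ^ n ≤ C := by
    intro ρ h0 h1
    set ρ' : NNReal := ⟨ρ, h0.le⟩ with hρ'
    have hsub : closedBall (0 : ℂ) ρ ⊆ Metric.eball (0 : ℂ) 1 := by
      intro w hw
      rw [mem_closedBall_zero_iff] at hw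
      rw [Metric.mem_eball, edist_eq_enorm_sub, sub_zero]
      have : ‖w‖ < 1 := lt_of_le_of_lt hw h1
      rwa [← ofReal_norm, ENNReal.ofReal_lt_one]
    have hd2 : DifferentiableOn ℂ g (closedBall (0 : ℂ) (ρ' : ℝ)) := hdiff.mono hsub
    have h2 := hd2.hasFPowerSeriesOnBall (by exact_mod_cast h0)
    have heq := hfps.hasFPowerSeriesAt.eq_formalMultilinearSeries h2.hasFPowerSeriesAt
    -- bound the cauchy coefficient
    have hbound := norm_cauchyPowerSeries_le g 0 (ρ' : ℝ) n
    have hInt : ∫ θ : ℝ in (0)..2 * Real.pi, ‖g (circleMap 0 (ρ' : ℝ) θ)‖ ≤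
        ∫ _ : ℝ in (0)..2 * Real.pi, C := by
      have hcm : ∀ θ : ℝ, ‖circleMap 0 (ρ' : ℝ) θ‖ < 1 := by
        intro θ
        have := norm_circleMap_zero (ρ' : ℝ) θ
        rw [this, abs_of_nonneg ρ'.coe_nonneg]
        exact h1
      apply intervalIntegral.integral_mono_on Real.two_pi_pos.le
      · apply ContinuousOn.intervalIntegrable
        apply ContinuousOn.norm
        apply (hdiff.continuousOn).comp (continuous_circleMap 0 (ρ' : ℝ)).continuousOn
        intro θ _
        rw [Metric.mem_eball, edist_eq_enorm_sub, sub_zero]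
        rw [← ofReal_norm, ENNReal.ofReal_lt_one]; exact hcm θ
      · exact intervalIntegrable_const
      · intro θ _
        exact hb _ (hcm θ)
    have hC0 : (0:ℝ) ≤ C := le_trans (norm_nonneg _) (hb 0 (by simp))
    have h3 : ‖cauchyPowerSeries g 0 (ρ' : ℝ) n‖ ≤ C * (ρ⁻¹) ^ n := by
      refine hbound.trans ?_
      rw [intervalIntegral.integral_const, smul_eq_mul, sub_zero] at hInt
      have : (2 * Real.pi)⁻¹ * ∫ θ : ℝ in (0)..2 * Real.pi, ‖g (circleMap 0 (ρ' : ℝ) θ)‖ ≤ C := by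
        rw [inv_mul_le_iff₀ Real.two_pi_pos]
        exact hInt
      have hρabs : |(ρ' : ℝ)| = ρ := abs_of_nonneg h0.le
      rw [hρabs]
      have h4 : (0:ℝ) ≤ (ρ⁻¹) ^ n := by positivity
      calc ((2 * Real.pi)⁻¹ * ∫ θ : ℝ in (0)..2 * Real.pi, ‖g (circleMap 0 (ρ' : ℝ) θ)‖) * ρ⁻¹ ^ n
          ≤ C * ρ⁻¹ ^ n := by
            apply mul_le_mul_of_nonneg_right this h4
      _ = C * ρ⁻¹ ^ n := rfl
    have h5 : ‖a n‖ = ‖cauchyPowerSeries g 0 (ρ' : ℝ) n‖ := by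
      rw [← heq]
      exact (ContinuousMultilinearMap.norm_mkPiRing (𝕜 := ℂ) (ι := Fin n) (a n)).symm
    rw [mul_comm]
    calc ρ ^ n * ‖a n‖ ≤ ρ ^ n * (C * (ρ⁻¹) ^ n) := by
          apply mul_le_mul_of_nonneg_left (h5 ▸ h3) (by positivity)
    _ = C := by
          rw [mul_comm C, ← mul_assoc, ← mul_pow, mul_inv_cancel₀ h0.ne', one_pow, one_mul]
  -- take the limit ρ → 1⁻
  have htend : Filter.Tendsto (fun ρ : ℝ => ‖a n‖ * ρ ^ n) (nhdsWithin 1 (Set.Iio 1))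
      (nhds (‖a n‖)) := by
    have : Filter.Tendsto (fun ρ : ℝ => ‖a n‖ * ρ ^ n) (nhds 1) (nhds (‖a n‖ * 1 ^ n)) := by
      apply Filter.Tendsto.const_mul
      exact (continuous_pow n).tendsto 1
    simpa using this.mono_left nhdsWithin_le_nhds
  refine le_of_tendsto htend ?_
  filter_upwards [Ioo_mem_nhdsLT_of_mem (Set.mem_Ioc.mpr ⟨zero_lt_one, le_refl (1:ℝ)⟩)] with ρ hρ
  exact key ρ hρ.1 hρ.2

/-- Schwarz–Pick at the origin: `‖G'(0)‖ ≤ 1 - ‖G 0‖²` for `G` analytic, bounded by 1. -/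
lemma vns_sp0 {G : ℂ → ℂ} (hd : DifferentiableOn ℂ G (ball (0:ℂ) 1))
    (hb : ∀ w ∈ ball (0:ℂ) 1, ‖G w‖ ≤ 1) : ‖deriv G 0‖ ≤ 1 - ‖G 0‖ ^ 2 := by
  have h01 : (0:ℂ) ∈ ball (0:ℂ) 1 := mem_ball_self one_pos
  by_cases hmax : ∃ w ∈ ball (0:ℂ) 1, 1 ≤ ‖G w‖
  · obtain ⟨w0, hw0, hw1⟩ := hmax
    have h1 : ‖G w0‖ = 1 := le_antisymm (hb _ hw0) hw1
    have hconst : Set.EqOn G (Function.const ℂ (G w0)) (ball (0:ℂ) 1) :=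
      Complex.eqOn_of_isPreconnected_of_isMaxOn_norm (convex_ball _ _).isPreconnected
        isOpen_ball hd hw0 (fun x hx => by
          simp only [Function.comp_apply, mem_setOf_eq]
          exact (hb x hx).trans h1.symm.le)
    have hG0 : G 0 = G w0 := hconst h01
    have hder : deriv G 0 = 0 := by
      have hev : G =ᶠ[nhds 0] (Function.const ℂ (G w0)) :=
        hconst.eventuallyEq_of_mem (isOpen_ball.mem_nhds h01)
      rw [hev.deriv_eq]
      exact deriv_const 0 (G w0)
    rw [hder, hG0, h1]
    norm_num
  · push_neg at hmax
    set α := G 0 with hα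
    have hαlt : ‖α‖ < 1 := hmax 0 h01
    set c := (starRingEnd ℂ) α with hc
    have hcnorm : ‖c‖ = ‖α‖ := by rw [hc]; exact RCLike.norm_conj α
    have hden : ∀ w ∈ ball (0:ℂ) 1, (1 : ℂ) - c * G w ≠ 0 := by
      intro w hw hcontra
      have h2 : c * G w = 1 := by linear_combination -hcontra
      have : ‖c * G w‖ < 1 := by
        rw [norm_mul, hcnorm]
        exact mul_lt_one_of_nonneg_of_lt_one_left (norm_nonneg _) hαlt (hmax w hw).le
      rw [h2] at this; simp at this
    set F : ℂ → ℂ := fun w => (G w - α) / (1 - c * G w) with hF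
    have hdF : DifferentiableOn ℂ F (ball (0:ℂ) 1) := by
      apply DifferentiableOn.div
      · exact hd.sub_const α
      · exact (differentiableOn_const 1).sub ((differentiableOn_const c).mul hd)
      · exact hden
    have hF0 : F 0 = 0 := by simp [hF, hα]
    have hkey : ∀ β : ℂ, ‖(1:ℂ) - c * β‖ ^ 2 - ‖β - α‖ ^ 2
        = (1 - ‖α‖ ^ 2) * (1 - ‖β‖ ^ 2) := by
      intro β
      have e1 : ‖(1:ℂ) - c * β‖ ^ 2 = Complex.normSq (1 - c * β) := by
        rw [← Complex.sq_norm]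
      have e2 : ‖β - α‖ ^ 2 = Complex.normSq (β - α) := by
        rw [← Complex.sq_norm]
      have e3 : ‖α‖ ^ 2 = Complex.normSq α := by rw [← Complex.sq_norm]
      have e4 : ‖β‖ ^ 2 = Complex.normSq β := by rw [← Complex.sq_norm]
      rw [e1, e2, e3, e4, hc]
      simp only [Complex.normSq_apply, Complex.sub_re, Complex.sub_im, Complex.mul_re,
        Complex.mul_im, Complex.one_re, Complex.one_im, Complex.conj_re, Complex.conj_im]
      ring
    have hmaps : Set.MapsTo F (ball (0:ℂ) 1) (ball (F 0) 1) := by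
      intro w hw
      rw [hF0, mem_ball_zero_iff]
      have hGw := hmax w hw
      have hd0 := hden w hw
      have hdpos : 0 < ‖(1:ℂ) - c * G w‖ := norm_pos_iff.mpr hd0
      rw [hF]
      simp only
      rw [norm_div, div_lt_one hdpos]
      have := hkey (G w)
      have hp1 : (0:ℝ) < 1 - ‖α‖ ^ 2 := by nlinarith [norm_nonneg α]
      have hp2 : (0:ℝ) < 1 - ‖G w‖ ^ 2 := by nlinarith [norm_nonneg (G w)]
      nlinarith [norm_nonneg ((1:ℂ) - c * G w), norm_nonneg (G w - α), mul_pos hp1 hp2]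
    have hSchwarz := Complex.norm_deriv_le_div_of_mapsTo_ball hdF (hmaps.mono_right ball_subset_closedBall) one_pos
    -- compute deriv F 0
    have hGd : HasDerivAt G (deriv G 0) 0 :=
      (hd.differentiableAt (isOpen_ball.mem_nhds h01)).hasDerivAt
    have hd0 : (1:ℂ) - c * G 0 ≠ 0 := hden 0 h01
    have hFd := (hGd.sub_const α).div
        ((hasDerivAt_const 0 (1:ℂ)).sub ((hasDerivAt_const 0 c).mul hGd)) hd0
    have hsimp : (1:ℂ) - c * G 0 = ((1 - ‖α‖^2 : ℝ) : ℂ) := by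
      have hintermediate : c * G 0 = ((‖α‖^2 : ℝ) : ℂ) := by
        rw [hc, ← hα, mul_comm, Complex.mul_conj, Complex.normSq_eq_norm_sq]
      rw [hintermediate]
      push_cast
      ring
    have hαpos : (0:ℝ) < 1 - ‖α‖ ^ 2 := by nlinarith [norm_nonneg α]
    have hne : ((1 - ‖α‖^2 : ℝ) : ℂ) ≠ 0 := by
      exact_mod_cast ne_of_gt hαpos
    have hz : G 0 - α = 0 := by rw [← hα, sub_self]
    have haux : ∀ (d t : ℂ), t ≠ 0 → d * t / t ^ 2 = d / t := by
      intro d t ht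
      field_simp
    have hdF0 : deriv F 0 = deriv G 0 / ((1 - ‖α‖^2 : ℝ) : ℂ) := by
      rw [(show HasDerivAt F ((deriv G 0 * (1 - c * G 0) - (G 0 - α) * (0 - (0 * G 0 + c * deriv G 0))) / (1 - c * G 0) ^ 2) 0 from hFd).deriv, hz, zero_mul, sub_zero, hsimp]
      exact haux _ _ hne
    rw [hdF0] at hSchwarz
    rw [norm_div] at hSchwarz
    have hnd : ‖((1 - ‖α‖^2 : ℝ) : ℂ)‖ = 1 - ‖α‖^2 := by
      rw [Complex.norm_real, Real.norm_eq_abs, abs_of_pos hαpos]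
    rw [hnd] at hSchwarz
    have := (div_le_one hαpos).mp (by simpa using hSchwarz)
    simpa [← hα] using this

/-- Wiener's coefficient bound for functions bounded by 1 on the unit disk. -/
lemma vns_wiener {g : ℂ → ℂ} {a : ℕ → ℂ}
    (hg : ∀ z : ℂ, ‖z‖ < 1 → HasSum (fun n => a n * z ^ n) (g z))
    (hb : ∀ z : ℂ, ‖z‖ < 1 → ‖g z‖ ≤ 1) {n : ℕ} (hn : 1 ≤ n) :
    ‖a n‖ ≤ 1 - ‖a 0‖ ^ 2 := by
  have hn0 : n ≠ 0 := by omega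
  have hcoef : ∀ m, ‖a m‖ ≤ 1 := vns_coeff_le hg hb
  set A : ℕ → ℂ := fun k => a (n * k) with hA
  set G : ℂ → ℂ := fun w => ∑' k, A k * w ^ k with hGdef
  have hGsum : ∀ w : ℂ, ‖w‖ < 1 → HasSum (fun k => A k * w ^ k) (G w) := by
    intro w hw
    have hsumm : Summable fun k => A k * w ^ k := by
      apply Summable.of_norm
      apply Summable.of_nonneg_of_le (fun k => norm_nonneg _) (fun k => ?_)
        (summable_geometric_of_lt_one (norm_nonneg w) hw)
      rw [norm_mul, norm_pow]
      exact mul_le_of_le_one_left (by positivity) (hcoef _)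
    exact hsumm.hasSum
  -- the primitive root
  set ζ : ℂ := Complex.exp (2 * Real.pi * Complex.I / n) with hζdef
  have hprim : IsPrimitiveRoot ζ n := Complex.isPrimitiveRoot_exp n hn0
  have hζabs : ‖ζ‖ = 1 := by
    have harg : (2 * (Real.pi:ℂ) * Complex.I / n : ℂ)
        = ((2 * Real.pi / n : ℝ) : ℂ) * Complex.I := by
      push_cast; ring
    rw [hζdef, harg, Complex.norm_exp_ofReal_mul_I]
  -- orthogonality of characters
  have horth : ∀ m : ℕ, ∑ j ∈ Finset.range n, (ζ ^ m) ^ j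
      = if n ∣ m then (n : ℂ) else 0 := by
    intro m
    by_cases hdvd : n ∣ m
    · have h1 : ζ ^ m = 1 := (hprim.pow_eq_one_iff_dvd m).mpr hdvd
      rw [if_pos hdvd]
      simp [h1]
    · have h1 : ζ ^ m ≠ 1 := fun he => hdvd ((hprim.pow_eq_one_iff_dvd m).mp he)
      rw [if_neg hdvd, geom_sum_eq h1]
      have h2 : (ζ ^ m) ^ n = 1 := by
        rw [← pow_mul, mul_comm, pow_mul, hprim.pow_eq_one, one_pow]
      rw [h2, sub_self, zero_div]
  -- boundedness of G
  have hGb : ∀ w ∈ ball (0:ℂ) 1, ‖G w‖ ≤ 1 := by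
    intro w hw
    rw [mem_ball_zero_iff] at hw
    obtain ⟨z, hz⟩ := IsAlgClosed.exists_pow_nat_eq w (show 0 < n by omega)
    have hzlt : ‖z‖ < 1 := by
      by_contra hcon
      push_neg at hcon
      have h1 : (1:ℝ) ^ n ≤ ‖z‖ ^ n := pow_le_pow_left₀ (by norm_num) hcon n
      rw [one_pow, ← norm_pow, hz] at h1
      linarith
    have hrot : ∀ j : ℕ, ‖ζ ^ j * z‖ < 1 := fun j => by
      rw [norm_mul, norm_pow, hζabs, one_pow, one_mul]; exact hzlt
    -- two HasSum statements for the same function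
    set f : ℕ → ℂ := fun m => (∑ j ∈ Finset.range n, (ζ ^ m) ^ j) * (a m * z ^ m) with hfdef
    have hs1 : HasSum f (∑ j ∈ Finset.range n, g (ζ ^ j * z)) := by
      have h1 : HasSum (fun m => ∑ j ∈ Finset.range n, a m * (ζ ^ j * z) ^ m)
          (∑ j ∈ Finset.range n, g (ζ ^ j * z)) :=
        hasSum_sum fun j _ => hg _ (hrot j)
      convert h1 using 1
      funext m
      rw [hfdef]
      simp only
      rw [Finset.sum_mul]
      congr 1
      funext j
      rw [mul_pow, ← pow_mul, ← pow_mul, mul_comm j m]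
      ring
    have hsupp : ∀ m, m ∉ Set.range (fun k : ℕ => n * k) → f m = 0 := by
      intro m hm
      have hndvd : ¬ n ∣ m := by
        intro ⟨k, hk⟩
        exact hm ⟨k, hk.symm⟩
      rw [hfdef]
      simp only
      rw [horth m, if_neg hndvd, zero_mul]
    have hinj : Function.Injective (fun k : ℕ => n * k) := fun x y hxy => by
      simpa [Nat.mul_right_inj hn0] using hxy
    have hs2 : HasSum (f ∘ fun k : ℕ => n * k) ((n : ℂ) * G w) := by
      have h1 : HasSum (fun k => (n:ℂ) * (A k * w ^ k)) ((n:ℂ) * G w) :=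
        (hGsum w hw).mul_left _
      convert h1 using 1
      funext k
      simp only [Function.comp_apply]
      rw [hfdef]
      simp only
      rw [horth (n * k), if_pos ⟨k, rfl⟩, ← hz, ← pow_mul]
    have hs2' : HasSum f ((n : ℂ) * G w) := (hinj.hasSum_iff hsupp).mp hs2
    have hkey : (n : ℂ) * G w = ∑ j ∈ Finset.range n, g (ζ ^ j * z) := hs2'.unique hs1
    -- conclude the bound
    have hnorm1 : (n : ℝ) * ‖G w‖ = ‖∑ j ∈ Finset.range n, g (ζ ^ j * z)‖ := by
      rw [← hkey, norm_mul, Complex.norm_natCast]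
    have hnorm2 : ‖∑ j ∈ Finset.range n, g (ζ ^ j * z)‖ ≤ (n : ℝ) := by
      refine (norm_sum_le _ _).trans ?_
      calc ∑ j ∈ Finset.range n, ‖g (ζ ^ j * z)‖ ≤ ∑ _j ∈ Finset.range n, (1:ℝ) :=
            Finset.sum_le_sum fun j _ => hb _ (hrot j)
      _ = (n : ℝ) := by simp
    have hnpos : (0:ℝ) < n := by positivity
    nlinarith [hnorm1, hnorm2]
  -- apply Schwarz–Pick at 0 to G
  have hfps := vns_hasFPS hGsum
  have hsub : ball (0:ℂ) 1 ⊆ Metric.eball (0:ℂ) 1 := by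
    intro w hw
    rw [mem_ball_zero_iff] at hw
    rw [Metric.mem_eball, edist_eq_enorm_sub, sub_zero]
    rwa [← ofReal_norm, ENNReal.ofReal_lt_one]
  have hdG : DifferentiableOn ℂ G (ball (0:ℂ) 1) := hfps.differentiableOn.mono hsub
  have hG0 : G 0 = a 0 := by
    have h1 := hGsum 0 (by norm_num)
    have h2 : HasSum (fun k => A k * (0:ℂ) ^ k) (A 0 * (0:ℂ) ^ 0) :=
      hasSum_single 0 (fun k hk => by rw [zero_pow hk, mul_zero])
    have h3 := h1.unique h2
    rw [h3, hA]
    simp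
  have hderiv : deriv G 0 = a n := by
    rw [hfps.hasFPowerSeriesAt.deriv]
    simp [ContinuousMultilinearMap.mkPiRing_apply, hA]
  have := vns_sp0 hdG hGb
  rwa [hderiv, hG0] at this

set_option maxHeartbeats 1000000 in
/-- Von Neumann–type inequality: if `h` is analytic on the disk, continuous on the
closed disk with sup norm `C`, whose majorant satisfies Bohr's inequality
`Σ |bₙ| rⁿ ≤ C`, then `M_r(h ∘ φ) ≤ C` for every Schwarz function `φ` and `0 ≤ r ≤ 1/3`. -/
theorem von_neumann_schwarz (h φ : ℂ → ℂ) (a b : ℕ → ℂ) (C : ℝ)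
    (hh : ∀ z : ℂ, ‖z‖ < 1 → HasSum (fun n => b n * z ^ n) (h z))
    (hcont : ContinuousOn h (Metric.closedBall (0 : ℂ) 1))
    (hC : C = ⨆ z : Metric.closedBall (0 : ℂ) 1, ‖h z‖)
    (r : ℝ) (hr0 : 0 ≤ r) (hr : r ≤ 1 / 3)
    (hBohr : ∑' n : ℕ, ‖b n‖ * r ^ n ≤ C)
    (hφ0 : φ 0 = 0)
    (hφb : ∀ z : ℂ, ‖z‖ < 1 → ‖φ z‖ ≤ 1)
    (hφa : AnalyticOnNhd ℂ φ (Metric.ball (0 : ℂ) 1))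
    (hcomp : ∀ z : ℂ, ‖z‖ < 1 → HasSum (fun n => a n * z ^ n) (h (φ z))) :
    ∑' n : ℕ, ‖a n‖ * r ^ n ≤ C := by
  -- C is an upper bound for ‖h‖ on the closed ball
  have hbdd : BddAbove (Set.range fun z : (Metric.closedBall (0:ℂ) 1) => ‖h z‖) := by
    have himg : (fun w => ‖h w‖) '' (Metric.closedBall (0:ℂ) 1)
        = Set.range fun z : (Metric.closedBall (0:ℂ) 1) => ‖h z‖ := Set.image_eq_range _ _
    rw [← himg]
    exact ((isCompact_closedBall (0:ℂ) 1).image_of_continuousOn hcont.norm).bddAbove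
  have hub : ∀ w ∈ Metric.closedBall (0:ℂ) 1, ‖h w‖ ≤ C := by
    intro w hw
    rw [hC]
    exact le_ciSup hbdd ⟨w, hw⟩
  -- the composition is bounded by C on the open ball
  have hbd : ∀ z : ℂ, ‖z‖ < 1 → ‖h (φ z)‖ ≤ C := by
    intro z hz
    apply hub
    rw [Metric.mem_closedBall, dist_zero_right]
    exact hφb z hz
  have hcoef : ∀ m, ‖a m‖ ≤ C := vns_coeff_le hcomp hbd
  have hC0 : (0:ℝ) ≤ C := le_trans (norm_nonneg (h 0)) (hub 0 (by simp))
  have hrlt : r < 1 := lt_of_le_of_lt hr (by norm_num)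
  -- summability
  have hsml : Summable fun m : ℕ => ‖a m‖ * r ^ m := by
    apply Summable.of_nonneg_of_le (fun m => by positivity) (fun m => ?_)
      ((summable_geometric_of_lt_one hr0 hrlt).mul_left C)
    exact mul_le_mul_of_nonneg_right (hcoef m) (pow_nonneg hr0 m)
  rcases eq_or_lt_of_le hC0 with hCeq | hCpos
  · -- degenerate case C = 0
    have hz : ∀ m : ℕ, ‖a m‖ * r ^ m = 0 := by
      intro m
      have := hcoef m
      rw [← hCeq] at this
      have : ‖a m‖ = 0 := le_antisymm this (norm_nonneg _)
      rw [this, zero_mul]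
    calc ∑' m : ℕ, ‖a m‖ * r ^ m = ∑' _ : ℕ, (0:ℝ) := by
          congr 1; funext m; exact hz m
    _ = 0 := tsum_zero
    _ ≤ C := hC0
  · -- main case C > 0
    have hCne : (C:ℂ) ≠ 0 := by exact_mod_cast ne_of_gt hCpos
    -- normalized function
    have hg' : ∀ z : ℂ, ‖z‖ < 1 → HasSum (fun m => (a m / C) * z ^ m) (h (φ z) / C) := by
      intro z hz
      have := (hcomp z hz).div_const (C : ℂ)
      have e : (fun m => (a m / C) * z ^ m) = fun m => a m * z ^ m / C := by
        funext m
        ring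
      rw [e]; exact this
    have hb' : ∀ z : ℂ, ‖z‖ < 1 → ‖h (φ z) / (C:ℂ)‖ ≤ 1 := by
      intro z hz
      rw [norm_div, Complex.norm_real, Real.norm_eq_abs, abs_of_pos hCpos]
      rw [div_le_one hCpos]
      exact hbd z hz
    have hnormdiv : ∀ m : ℕ, ‖a m / (C:ℂ)‖ = ‖a m‖ / C := by
      intro m
      rw [norm_div, Complex.norm_real, Real.norm_eq_abs, abs_of_pos hCpos]
    have hW : ∀ m : ℕ, 1 ≤ m → ‖a m‖ ≤ C - ‖a 0‖ ^ 2 / C := by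
      intro m hm
      have := vns_wiener hg' hb' hm
      rw [hnormdiv m, hnormdiv 0] at this
      rw [div_pow] at this
      rw [div_le_iff₀ hCpos] at this
      calc ‖a m‖ ≤ (1 - ‖a 0‖ ^ 2 / C ^ 2) * C := this
      _ = C - ‖a 0‖ ^ 2 / C := by field_simp
    -- sum up
    set x := ‖a 0‖ with hx
    set K := C - x ^ 2 / C with hK
    have hxC : x ≤ C := hcoef 0
    have hx0 : 0 ≤ x := norm_nonneg _
    have hK0 : 0 ≤ K := by
      rw [hK]
      rw [sub_nonneg, div_le_iff₀ hCpos]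
      nlinarith
    have hsplit : ∑' m : ℕ, ‖a m‖ * r ^ m
        = x * r ^ 0 + ∑' m : ℕ, ‖a (m+1)‖ * r ^ (m+1) :=
      hsml.tsum_eq_zero_add
    have htail : ∑' m : ℕ, ‖a (m+1)‖ * r ^ (m+1) ≤ K * r * (1 - r)⁻¹ := by
      have hb2 : ∀ m : ℕ, ‖a (m+1)‖ * r ^ (m+1) ≤ (K * r) * r ^ m := by
        intro m
        have h1 : ‖a (m+1)‖ ≤ K := hW (m+1) (by omega)
        calc ‖a (m+1)‖ * r ^ (m+1) ≤ K * r ^ (m+1) :=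
              mul_le_mul_of_nonneg_right h1 (pow_nonneg hr0 _)
        _ = (K * r) * r ^ m := by ring
      calc ∑' m : ℕ, ‖a (m+1)‖ * r ^ (m+1) ≤ ∑' m : ℕ, (K * r) * r ^ m := by
            apply Summable.tsum_le_tsum hb2 ((summable_nat_add_iff 1).mpr hsml)
              (((summable_geometric_of_lt_one hr0 hrlt).mul_left (K * r)))
      _ = (K * r) * (1 - r)⁻¹ := by
            rw [tsum_mul_left, tsum_geometric_of_lt_one hr0 hrlt]
    have hhalf : r * (1 - r)⁻¹ ≤ 1 / 2 := by
      rw [← div_eq_mul_inv, div_le_div_iff₀ (by linarith) (by norm_num)]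
      linarith
    have hfin : x + K * (r * (1 - r)⁻¹) ≤ C := by
      have h1 : K * (r * (1 - r)⁻¹) ≤ K * (1/2) := mul_le_mul_of_nonneg_left hhalf hK0
      have h2 : x ^ 2 / C * C = x ^ 2 := div_mul_cancel₀ _ (ne_of_gt hCpos)
      nlinarith [sq_nonneg (C - x)]
    calc ∑' m : ℕ, ‖a m‖ * r ^ m = x * r ^ 0 + ∑' m : ℕ, ‖a (m+1)‖ * r ^ (m+1) := hsplit
    _ ≤ x + K * r * (1 - r)⁻¹ := by
          rw [pow_zero, mul_one]
          exact add_le_add_right htail x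
    _ = x + K * (r * (1 - r)⁻¹) := by ring
    _ ≤ C := hfin
end

section
/- If φ is a Schwarz function and j ≥ 1, then for every k ≥ 0 and every z with |z| ≤ 1/2, the k-th section of φ^j satisfies |s_k(z; φ^j)| ≤ |z|^j. -/
section RogosinskiAux
open Complex Real MeasureTheory intervalIntegral Finset Metric

lemma orth (n : ℤ) : (∫ θ in (0:ℝ)..(2*π), Complex.exp (n * θ * Complex.I)) =
    if n = 0 then (2*π : ℂ) else 0 := by
  split_ifs with h
  · simp [h, Complex.ofReal_mul]
  · have hc : (n : ℂ) * Complex.I ≠ 0 := by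
      simp [Complex.I_ne_zero, h]
    have key := integral_exp_mul_complex (a := (0:ℝ)) (b := 2*π) hc
    have h1 : Complex.exp ((n : ℂ) * Complex.I * ((2*π:ℝ):ℂ)) = 1 := by
      rw [show ((n:ℂ) * Complex.I * ((2*π:ℝ):ℂ)) = n * (2 * π * Complex.I) by push_cast; ring]
      exact Complex.exp_int_mul_two_pi_mul_I n
    calc (∫ θ in (0:ℝ)..(2*π), Complex.exp (n * θ * Complex.I))
        = ∫ θ in (0:ℝ)..(2*π), Complex.exp ((n * Complex.I) * θ) := by
          congr 1; funext θ; ring_nf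
      _ = (Complex.exp ((n:ℂ) * Complex.I * ((2*π:ℝ):ℂ)) - Complex.exp ((n:ℂ)*Complex.I*((0:ℝ):ℂ))) / ((n:ℂ)*Complex.I) := key
      _ = 0 := by rw [h1]; simp

lemma coefSummable {φ : ℂ → ℂ} {j : ℕ} {c : ℕ → ℂ}
    (hφ : ∀ z : ℂ, ‖z‖ < 1 → HasSum (fun n => c n * z ^ n) (φ z ^ j))
    (r : ℝ) (hr0 : 0 ≤ r) (hr1 : r < 1) : Summable (fun ν : ℕ => ‖c ν‖ * r^ν) := by
  set x : ℝ := (1 + r)/2 with hx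
  have hxr : r < x := by rw [hx]; linarith
  have hx0 : 0 < x := by rw [hx]; linarith
  have hx1 : x < 1 := by rw [hx]; linarith
  have hsum : Summable (fun ν : ℕ => c ν * (x:ℂ)^ν) := by
    refine (hφ (x:ℂ) ?_).summable
    rw [Complex.norm_real, Real.norm_of_nonneg hx0.le]; exact hx1
  have htend : Filter.Tendsto (fun ν : ℕ => ‖c ν * (x:ℂ)^ν‖) Filter.atTop (nhds 0) := by
    rw [show (0:ℝ) = ‖(0:ℂ)‖ by simp]
    exact (hsum.tendsto_atTop_zero).norm
  obtain ⟨M, hM⟩ := htend.bddAbove_range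
  have hM' : ∀ ν : ℕ, ‖c ν‖ * x^ν ≤ M := by
    intro ν
    have h2 := hM ⟨ν, rfl⟩
    have h3 : ‖c ν * (x:ℂ)^ν‖ = ‖c ν‖ * x^ν := by
      rw [norm_mul, norm_pow, Complex.norm_real, Real.norm_of_nonneg hx0.le]
    rw [← h3]; exact h2
  have hgeo : Summable (fun ν : ℕ => M * (r/x)^ν) := by
    apply Summable.mul_left
    apply summable_geometric_of_lt_one (by positivity)
    rw [div_lt_one hx0]; exact hxr
  apply Summable.of_nonneg_of_le (fun ν => by positivity) _ hgeo
  intro ν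
  have h1 : ‖c ν‖ * r^ν = (‖c ν‖ * x^ν) * (r/x)^ν := by
    rw [mul_assoc, ← mul_pow, mul_comm x, div_mul_cancel₀ r hx0.ne']
  rw [h1]
  exact mul_le_mul_of_nonneg_right (hM' ν) (by positivity)

lemma fourierCoeffInt {φ : ℂ → ℂ} {j : ℕ} {c : ℕ → ℂ}
    (hφ : ∀ z : ℂ, ‖z‖ < 1 → HasSum (fun n => c n * z ^ n) (φ z ^ j))
    (r : ℝ) (hr0 : 0 < r) (hr1 : r < 1) (n : ℤ) :
    (∫ θ in (0:ℝ)..(2*π), φ (r * Complex.exp (θ * Complex.I))^j * Complex.exp (n * θ * Complex.I))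
    = (2*π : ℝ) * (if 0 ≤ -n then c (-n).toNat * (r:ℂ)^(-n).toNat else 0) := by
  have h2π : (0:ℝ) ≤ 2*π := by positivity
  set F : ℕ → ℝ → ℂ := fun ν θ => c ν * (r * Complex.exp (θ * Complex.I))^ν * Complex.exp (n * θ * Complex.I) with hF
  have hnorm : ∀ ν θ, ‖F ν θ‖ = ‖c ν‖ * r^ν := by
    intro ν θ
    simp only [hF, norm_mul, norm_pow]
    have e2 : ‖Complex.exp ((n:ℂ) * θ * Complex.I)‖ = 1 := by
      rw [show ((n:ℂ) * θ * Complex.I) = ((n*θ :ℝ) : ℂ) * Complex.I by push_cast; ring,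
        Complex.norm_exp_ofReal_mul_I]
    simp [Complex.norm_exp_ofReal_mul_I, Complex.norm_real, abs_of_pos hr0, e2]
  have hcont : ∀ ν, Continuous (F ν) := by
    intro ν
    apply Continuous.mul
    apply Continuous.mul continuous_const
    · apply Continuous.pow
      exact continuous_const.mul (Complex.continuous_exp.comp (by fun_prop))
    · exact Complex.continuous_exp.comp (by fun_prop)
  have h_int : ∀ ν, IntegrableOn (F ν) (Set.Ioc (0:ℝ) (2*π)) volume := fun ν =>
    (hcont ν).integrableOn_Ioc
  have h_sum : Summable (fun ν => ∫ θ in Set.Ioc (0:ℝ) (2*π), ‖F ν θ‖) := by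
    have : (fun ν => ∫ θ in Set.Ioc (0:ℝ) (2*π), ‖F ν θ‖)
        = fun ν => (2*π) * (‖c ν‖ * r^ν) := by
      funext ν
      simp only [hnorm]
      rw [MeasureTheory.setIntegral_const]
      simp [Real.volume_Ioc, ENNReal.toReal_ofReal h2π]
      try ring
      exact Or.inl Real.pi_pos.le
    rw [this]
    exact (coefSummable hφ r hr0.le hr1).mul_left _
  have hswap := MeasureTheory.integral_tsum_of_summable_integral_norm h_int h_sum
  -- identify the tsum with the integrand
  have hptw : ∀ θ : ℝ, (∑' ν, F ν θ) = φ (r * Complex.exp (θ * Complex.I))^j * Complex.exp (n * θ * Complex.I) := by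
    intro θ
    have hw : ‖(r : ℂ) * Complex.exp (θ * Complex.I)‖ < 1 := by
      rw [norm_mul,
        show ((θ:ℂ) * Complex.I) = ((θ:ℝ):ℂ) * Complex.I by norm_num,
        Complex.norm_exp_ofReal_mul_I, Complex.norm_real, Real.norm_of_nonneg hr0.le]
      simpa using hr1
    have := (hφ _ hw).tsum_eq
    rw [hF]
    rw [tsum_mul_right, this]
  -- compute each integral
  have hterm : ∀ ν : ℕ, (∫ θ in Set.Ioc (0:ℝ) (2*π), F ν θ)
      = c ν * (r:ℂ)^ν * (if (ν:ℤ) + n = 0 then (2*π:ℂ) else 0) := by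
    intro ν
    have : ∀ θ : ℝ, F ν θ = c ν * (r:ℂ)^ν * Complex.exp ((((ν:ℤ) + n) : ℤ) * θ * Complex.I) := by
      intro θ
      have e3 : Complex.exp ((ν:ℂ) * ((θ:ℂ) * Complex.I)) * Complex.exp ((n:ℂ) * θ * Complex.I)
          = Complex.exp ((((ν:ℤ) + n : ℤ):ℂ) * θ * Complex.I) := by
        rw [← Complex.exp_add]; congr 1; push_cast; ring
      rw [hF]
      simp only
      rw [mul_pow, ← Complex.exp_nat_mul, ← e3]
      ring
    simp only [this]
    rw [MeasureTheory.integral_const_mul]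
    rw [← intervalIntegral.integral_of_le h2π]
    rw [orth ((ν:ℤ) + n)]
  rw [← intervalIntegral.integral_of_le h2π] at hswap
  rw [show (fun θ => ∑' ν, F ν θ) = (fun θ : ℝ => φ (r * Complex.exp (θ * Complex.I))^j * Complex.exp (n * θ * Complex.I)) from funext hptw] at hswap
  rw [← hswap]
  simp only [hterm]
  -- now compute the tsum
  by_cases hn : 0 ≤ -n
  · rw [if_pos hn]
    rw [tsum_eq_single ((-n).toNat)]
    · rw [if_pos (by omega)]
      push_cast; ring
    · intro ν hν
      rw [if_neg (by omega), mul_zero]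
  · rw [if_neg hn, mul_zero]
    rw [tsum_eq_single 0]
    · rw [if_neg (by omega), mul_zero]
    · intro ν hν
      rw [if_neg (by omega), mul_zero]

lemma schwarzBound {φ : ℂ → ℂ} (h0 : φ 0 = 0)
    (hb : ∀ z : ℂ, ‖z‖ < 1 → ‖φ z‖ ≤ 1)
    (hanalytic : AnalyticOnNhd ℂ φ (Metric.ball (0 : ℂ) 1)) :
    ∀ w : ℂ, ‖w‖ < 1 → ‖φ w‖ ≤ ‖w‖ := by
  intro w hw
  have hdiff : DifferentiableOn ℂ φ (ball (0:ℂ) 1) := hanalytic.differentiableOn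
  have key : ∀ ε : ℝ, 0 < ε → ε < 1 → (1-ε) * ‖φ w‖ ≤ ‖w‖ := by
    intro ε hε0 hε1
    have hd2 : DifferentiableOn ℂ (fun z => (1-ε:ℂ) * φ z) (ball (0:ℂ) 1) :=
      hdiff.const_mul _
    have hmaps : Set.MapsTo (fun z => (1-ε:ℂ) * φ z) (ball (0:ℂ) 1) (ball (0:ℂ) 1) := by
      intro x hx
      rw [mem_ball_zero_iff] at hx ⊢
      rw [norm_mul]
      have h1 : ‖(1-ε:ℂ)‖ = 1 - ε := by
        rw [show ((1:ℂ)-ε) = ((1-ε:ℝ):ℂ) by push_cast; ring, Complex.norm_real,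
          Real.norm_of_nonneg (by linarith)]
      rw [h1]
      calc (1-ε) * ‖φ x‖ ≤ (1-ε) * 1 := by
            exact mul_le_mul_of_nonneg_left (hb x hx) (by linarith)
        _ < 1 := by linarith
    have := Complex.norm_le_norm_of_mapsTo_ball hd2 (hmaps.mono_right Metric.ball_subset_closedBall) (by simp [h0]) hw
    rw [norm_mul] at this
    have h1 : ‖(1-ε:ℂ)‖ = 1 - ε := by
      rw [show ((1:ℂ)-ε) = ((1-ε:ℝ):ℂ) by push_cast; ring, Complex.norm_real,
        Real.norm_of_nonneg (by linarith)]
    rwa [h1] at this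
  by_contra hc
  push_neg at hc
  set A := ‖φ w‖
  set B := ‖w‖
  have hA0 : 0 < A := lt_of_le_of_lt (norm_nonneg w) hc
  set ε := min ((A - B)/(2*A)) (1/2) with hε
  have hε0 : 0 < ε := by
    apply lt_min
    · apply div_pos (by linarith) (by linarith)
    · norm_num
  have hε1 : ε < 1 := lt_of_le_of_lt (min_le_right _ _) (by norm_num)
  have := key ε hε0 hε1
  have hεle : ε ≤ (A - B)/(2*A) := min_le_left _ _
  have : (1 - (A-B)/(2*A)) * A ≤ (1 - ε) * A := by nlinarith
  have hAB : (1 - (A-B)/(2*A)) * A = (A + B)/2 := by field_simp; ring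
  nlinarith [key ε hε0 hε1]

lemma normPhiPow {φ : ℂ → ℂ} {j : ℕ} (hs : ∀ w : ℂ, ‖w‖ < 1 → ‖φ w‖ ≤ ‖w‖)
    (r : ℝ) (hr0 : 0 < r) (hr1 : r < 1) (θ : ℝ) :
    ‖φ ((r:ℂ) * Complex.exp (θ * Complex.I))^j‖ ≤ r^j := by
  have hw : ‖(r:ℂ) * Complex.exp (θ * Complex.I)‖ = r := by
    rw [norm_mul,
      show ((θ:ℂ) * Complex.I) = ((θ:ℝ):ℂ) * Complex.I by norm_num,
      Complex.norm_exp_ofReal_mul_I, Complex.norm_real, Real.norm_of_nonneg hr0.le, mul_one]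
  rw [norm_pow]
  apply pow_le_pow_left₀ (norm_nonneg _)
  calc ‖φ ((r:ℂ) * Complex.exp (θ * Complex.I))‖ ≤ ‖(r:ℂ) * Complex.exp (θ * Complex.I)‖ :=
        hs _ (by rw [hw]; exact hr1)
    _ = r := hw

lemma vanish {φ : ℂ → ℂ} {j : ℕ} {c : ℕ → ℂ}
    (hφ : ∀ z : ℂ, ‖z‖ < 1 → HasSum (fun n => c n * z ^ n) (φ z ^ j))
    (hs : ∀ w : ℂ, ‖w‖ < 1 → ‖φ w‖ ≤ ‖w‖) :
    ∀ ν : ℕ, ν < j → c ν = 0 := by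
  intro ν hν
  have key : ∀ r : ℝ, 0 < r → r < 1 → ‖c ν‖ ≤ r^(j - ν) := by
    intro r hr0 hr1
    have h1 := fourierCoeffInt hφ r hr0 hr1 (-(ν:ℤ))
    rw [if_pos (by omega)] at h1
    have h2 : ((-(-(ν:ℤ))).toNat) = ν := by omega
    rw [h2] at h1
    have hbound : ‖∫ θ in (0:ℝ)..(2*π),
        φ (r * Complex.exp (θ * Complex.I))^j * Complex.exp ((-(ν:ℤ)) * θ * Complex.I)‖
        ≤ r^j * |2*π - 0| := by
      apply intervalIntegral.norm_integral_le_of_norm_le_const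
      intro θ hθ
      rw [norm_mul]
      have e2 : ‖Complex.exp ((-(ν:ℤ):ℂ) * θ * Complex.I)‖ = 1 := by
        rw [show ((-(ν:ℤ):ℂ) * θ * Complex.I) = (((-(ν:ℤ)*θ :ℝ)) : ℂ) * Complex.I by push_cast; ring,
          Complex.norm_exp_ofReal_mul_I]
      rw [e2, mul_one]
      exact normPhiPow hs r hr0 hr1 θ
    rw [show ((-(ν:ℤ):ℂ)) = ((-ν : ℤ) : ℂ) by push_cast; ring] at hbound
    rw [h1] at hbound
    rw [norm_mul, norm_mul, Complex.norm_real] at hbound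
    have hπ : (0:ℝ) < 2*π := by positivity
    rw [Real.norm_of_nonneg hπ.le, norm_pow, Complex.norm_real, Real.norm_of_nonneg hr0.le] at hbound
    rw [abs_of_pos (by linarith : (0:ℝ) < 2*π - 0)] at hbound
    have h3 : ‖c ν‖ * r^ν ≤ r^j := by nlinarith [norm_nonneg (c ν), pow_pos hr0 ν, pow_pos hr0 j]
    have h4 : r^j = r^(j-ν) * r^ν := by rw [← pow_add]; congr 1; omega
    rw [h4] at h3
    exact le_of_mul_le_mul_right h3 (pow_pos hr0 ν)
  have htend : Filter.Tendsto (fun m : ℕ => ((1:ℝ)/(m+2))^(j-ν)) Filter.atTop (nhds 0) := by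
    have h5 : Filter.Tendsto (fun m : ℕ => ((1:ℝ)/(m+2))) Filter.atTop (nhds 0) := by
      have := Filter.Tendsto.comp (tendsto_one_div_atTop_nhds_zero_nat (𝕜 := ℝ)) (Filter.tendsto_add_atTop_nat 2)
      convert this using 1
      funext m
      simp only [Function.comp_apply]
      push_cast; ring
    have := h5.pow (j-ν)
    rwa [zero_pow (by omega : j - ν ≠ 0)] at this
  have hle : ∀ m : ℕ, ‖c ν‖ ≤ ((1:ℝ)/(m+2))^(j-ν) := by
    intro m
    apply key
    · positivity
    · rw [div_lt_one (by positivity)]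
      have : (0:ℝ) ≤ m := Nat.cast_nonneg m
      linarith
  have : ‖c ν‖ ≤ 0 := ge_of_tendsto htend (Filter.Eventually.of_forall hle)
  exact norm_eq_zero.1 (le_antisymm this (norm_nonneg _))

lemma kernelpos (w : ℂ) (hw : ‖w‖ ≤ 1/2) (N : ℕ) :
    1 ≤ 2 * (∑ m ∈ Finset.range (N+1), w^m).re := by
  rcases Nat.eq_zero_or_pos N with hN | hN
  · simp [hN]
  set S := ∑ m ∈ Finset.range (N+1), w^m with hS
  have hg : S * (w - 1) = w^(N+1) - 1 := geom_sum_mul w (N+1)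
  have key : (2*S - 1) * ((1-w) * (starRingEnd ℂ) (1-w))
      = (1 + w - 2*w^(N+1)) * (1 - (starRingEnd ℂ) w) := by
    have : (starRingEnd ℂ) (1-w) = 1 - (starRingEnd ℂ) w := by rw [map_sub, map_one]
    rw [this]
    linear_combination (-2 * (1 - (starRingEnd ℂ) w)) * hg
  have hnsq : (1-w) * (starRingEnd ℂ) (1-w) = ((Complex.normSq (1-w) : ℝ) : ℂ) :=
    Complex.mul_conj _
  have hre : (2 * S.re - 1) * Complex.normSq (1-w)
      = ((1 + w - 2*w^(N+1)) * (1 - (starRingEnd ℂ) w)).re := by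
    rw [← key, hnsq]
    simp [Complex.mul_re, Complex.sub_re, Complex.one_re, Complex.ofReal_re, Complex.ofReal_im]
  set t := ‖w‖ with ht
  have ht0 : 0 ≤ t := norm_nonneg w
  -- bound the RHS from below
  have expand : ((1 + w - 2*w^(N+1)) * (1 - (starRingEnd ℂ) w)).re
      = 1 - Complex.normSq w - 2 * (w^(N+1) * (1 - (starRingEnd ℂ) w)).re := by
    have : (1 + w - 2*w^(N+1)) * (1 - (starRingEnd ℂ) w)
        = 1 - (starRingEnd ℂ) w + w - w * (starRingEnd ℂ) w - 2 * (w^(N+1) * (1 - (starRingEnd ℂ) w)) := by ring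
    rw [this]
    rw [Complex.mul_conj w]
    simp [Complex.sub_re, Complex.add_re, Complex.conj_re]
  have habs : (w^(N+1) * (1 - (starRingEnd ℂ) w)).re ≤ t^(N+1) * (1 + t) := by
    calc (w^(N+1) * (1 - (starRingEnd ℂ) w)).re ≤ ‖w^(N+1) * (1 - (starRingEnd ℂ) w)‖ :=
          Complex.re_le_norm _
      _ = ‖w‖^(N+1) * ‖1 - (starRingEnd ℂ) w‖ := by rw [norm_mul, norm_pow]
      _ ≤ t^(N+1) * (1 + t) := by
          gcongr
          calc ‖1 - (starRingEnd ℂ) w‖ ≤ ‖(1:ℂ)‖ + ‖(starRingEnd ℂ) w‖ := norm_sub_le _ _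
            _ = 1 + t := by rw [ht]; simp
  have hpow : t^(N+1) ≤ t^2 := by
    apply pow_le_pow_of_le_one ht0 (by linarith) (by omega)
  have hnsq_pos : 0 < Complex.normSq (1-w) := by
    apply Complex.normSq_pos.2
    intro h
    have hw1 : w = 1 := by linear_combination -h
    rw [hw1] at ht
    rw [ht] at hw; norm_num at hw
  have hnsq_le : Complex.normSq w = t^2 := by
    rw [ht, ← Complex.sq_norm]
  nlinarith [hre, expand, habs, hpow, hnsq_pos, Complex.normSq_nonneg w]

lemma expmul (a : ℤ) (m : ℕ) (w : ℂ) (θ : ℝ) :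
    Complex.exp ((a:ℂ) * θ * Complex.I) * (w * Complex.exp (-(θ:ℂ) * Complex.I))^m
    = w^m * Complex.exp (((a - m : ℤ):ℂ) * θ * Complex.I) := by
  have h1 : Complex.exp (-(θ:ℂ) * Complex.I)^m = Complex.exp (-(m:ℂ) * θ * Complex.I) := by
    rw [← Complex.exp_nat_mul]; congr 1; ring
  rw [mul_pow, h1, show (((a - m : ℤ):ℂ) * θ * Complex.I)
    = (a:ℂ) * θ * Complex.I + (-(m:ℂ) * θ * Complex.I) by push_cast; ring, Complex.exp_add]
  ring

lemma expmul' (a : ℤ) (m : ℕ) (w : ℂ) (θ : ℝ) :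
    Complex.exp ((a:ℂ) * θ * Complex.I) * (w * Complex.exp ((θ:ℂ) * Complex.I))^m
    = w^m * Complex.exp (((a + m : ℤ):ℂ) * θ * Complex.I) := by
  have h1 : Complex.exp ((θ:ℂ) * Complex.I)^m = Complex.exp ((m:ℂ) * θ * Complex.I) := by
    rw [← Complex.exp_nat_mul]; congr 1; ring
  rw [mul_pow, h1, show (((a + m : ℤ):ℂ) * θ * Complex.I)
    = (a:ℂ) * θ * Complex.I + ((m:ℂ) * θ * Complex.I) by push_cast; ring, Complex.exp_add]
  ring

lemma Enorm (n : ℤ) (θ : ℝ) : ‖Complex.exp ((n:ℂ) * θ * Complex.I)‖ = 1 := by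
  rw [show ((n:ℂ) * θ * Complex.I) = ((n*θ : ℝ):ℂ) * Complex.I by push_cast; ring,
    Complex.norm_exp_ofReal_mul_I]

lemma mainEst {φ : ℂ → ℂ} {j : ℕ} {c : ℕ → ℂ}
    (hφ : ∀ z : ℂ, ‖z‖ < 1 → HasSum (fun n => c n * z ^ n) (φ z ^ j))
    (hs : ∀ w : ℂ, ‖w‖ < 1 → ‖φ w‖ ≤ ‖w‖)
    (hvan : ∀ ν : ℕ, ν < j → c ν = 0)
    (hco : ContinuousOn φ (Metric.ball (0:ℂ) 1))
    (N : ℕ) (z : ℂ) (hz : ‖z‖ ≤ 1/2) (r : ℝ) (hr0 : 0 < r) (hr1 : r < 1) :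
    ‖∑ m ∈ Finset.range (N+1), c (j+m) * (r:ℂ)^(j+m) * z^m‖ ≤ r^j := by
  have h2π : (0:ℝ) < 2*π := by positivity
  set G : ℝ → ℂ := fun θ => φ ((r:ℂ) * Complex.exp ((θ:ℂ) * Complex.I))^j with hG
  set E : ℤ → ℝ → ℂ := fun n θ => Complex.exp ((n:ℂ) * θ * Complex.I) with hE
  set S : ℝ → ℂ := fun θ => ∑ m ∈ Finset.range (N+1), (z * Complex.exp (-(θ:ℂ) * Complex.I))^m with hS
  set kR : ℝ → ℝ := fun θ => 2 * (S θ).re - 1 with hkR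
  -- positivity of the kernel
  have hwnorm : ∀ θ : ℝ, ‖z * Complex.exp (-(θ:ℂ) * Complex.I)‖ = ‖z‖ := by
    intro θ
    rw [norm_mul,
      show (-(θ:ℂ) * Complex.I) = (((-θ : ℝ)):ℂ) * Complex.I by push_cast; ring,
      Complex.norm_exp_ofReal_mul_I, mul_one]
  have hpos : ∀ θ : ℝ, 0 ≤ kR θ := by
    intro θ
    have := kernelpos (z * Complex.exp (-(θ:ℂ) * Complex.I)) (by rw [hwnorm]; exact hz) N
    simp only [hkR, hS]
    linarith
  -- K as a sum
  have hK : ∀ θ : ℝ, ((kR θ : ℝ) : ℂ) = (∑ m ∈ Finset.range (N+1),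
      ((z * Complex.exp (-(θ:ℂ) * Complex.I))^m
        + ((starRingEnd ℂ) z * Complex.exp ((θ:ℂ) * Complex.I))^m)) - 1 := by
    intro θ
    have hconjS : (starRingEnd ℂ) (S θ) = ∑ m ∈ Finset.range (N+1),
        ((starRingEnd ℂ) z * Complex.exp ((θ:ℂ) * Complex.I))^m := by
      have hcexp : (starRingEnd ℂ) (Complex.exp (-(θ:ℂ) * Complex.I)) = Complex.exp ((θ:ℂ) * Complex.I) := by
        rw [← Complex.exp_conj]
        congr 1
        simp [map_mul, map_neg, Complex.conj_ofReal, Complex.conj_I]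
      rw [hS]
      simp only [map_sum, map_pow, map_mul, hcexp]
    have hadd : S θ + (starRingEnd ℂ) (S θ) = ((2 * (S θ).re : ℝ) : ℂ) := by
      rw [Complex.add_conj]; try push_cast; try ring
    rw [hkR]
    simp only
    push_cast
    rw [show (2:ℂ) * (((S θ).re : ℝ):ℂ) - 1 = (((2 * (S θ).re:ℝ)):ℂ) - 1 by push_cast; ring]
    rw [← hadd, hconjS, hS]
    try rw [← Finset.sum_add_distrib]
    try ring
  -- continuity
  have hGcont : Continuous G := by
    rw [hG]
    apply Continuous.pow
    apply hco.comp_continuous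
    · exact continuous_const.mul (Complex.continuous_exp.comp (by fun_prop))
    · intro θ
      rw [mem_ball_zero_iff, norm_mul,
        show ((θ:ℂ) * Complex.I) = (((θ : ℝ)):ℂ) * Complex.I by norm_num,
        Complex.norm_exp_ofReal_mul_I, mul_one, Complex.norm_real, Real.norm_of_nonneg hr0.le]
      exact hr1
  have hEcont : ∀ n : ℤ, Continuous (E n) := by
    intro n; rw [hE]; exact Complex.continuous_exp.comp (by fun_prop)
  have hScont : Continuous S := by
    rw [hS]
    apply continuous_finset_sum
    intro m _
    exact ((continuous_const.mul (Complex.continuous_exp.comp (by fun_prop))).pow m)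
  have hkRcont : Continuous kR := by
    rw [hkR]; fun_prop
  -- the integral identity
  have hint : ∀ n : ℤ, IntervalIntegrable (fun θ => G θ * E n θ) volume 0 (2*π) :=
    fun n => (hGcont.mul (hEcont n)).intervalIntegrable _ _
  have hJ : ∀ n : ℤ, (∫ θ in (0:ℝ)..(2*π), G θ * E n θ)
      = (2*π:ℝ) * (if 0 ≤ -n then c (-n).toNat * (r:ℂ)^(-n).toNat else 0) := by
    intro n
    exact fourierCoeffInt hφ r hr0 hr1 n
  -- pointwise expansion of the main integrand
  have hptw : ∀ θ : ℝ, G θ * E (-(j:ℤ)) θ * ((kR θ : ℝ) : ℂ)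
      = (∑ m ∈ Finset.range (N+1),
          (z^m * (G θ * E (-(j:ℤ)-m) θ) + ((starRingEnd ℂ) z)^m * (G θ * E ((m:ℤ)-j) θ)))
        - G θ * E (-(j:ℤ)) θ := by
    intro θ
    rw [hK θ, mul_sub, mul_one, Finset.mul_sum]
    congr 1
    apply Finset.sum_congr rfl
    intro m _
    rw [mul_add]
    congr 1
    · have := expmul (-(j:ℤ)) m z θ
      rw [hE]
      simp only
      rw [mul_assoc, this]
      push_cast
      ring
    · have := expmul' (-(j:ℤ)) m ((starRingEnd ℂ) z) θ
      rw [hE]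
      simp only
      rw [mul_assoc, this]
      push_cast
      ring
  -- integrate the identity
  have hintA : ∀ m ∈ Finset.range (N+1), IntervalIntegrable
      (fun θ => z^m * (G θ * E (-(j:ℤ)-m) θ) + ((starRingEnd ℂ) z)^m * (G θ * E ((m:ℤ)-j) θ))
      volume 0 (2*π) := by
    intro m _
    exact ((hint _).const_mul _).add ((hint _).const_mul _)
  have hIdent : (∫ θ in (0:ℝ)..(2*π), G θ * E (-(j:ℤ)) θ * ((kR θ : ℝ) : ℂ))
      = (2*π:ℝ) * ∑ m ∈ Finset.range (N+1), c (j+m) * (r:ℂ)^(j+m) * z^m := by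
    rw [show (fun θ : ℝ => G θ * E (-(j:ℤ)) θ * ((kR θ : ℝ) : ℂ))
        = (fun θ : ℝ => (∑ m ∈ Finset.range (N+1),
          (z^m * (G θ * E (-(j:ℤ)-m) θ) + ((starRingEnd ℂ) z)^m * (G θ * E ((m:ℤ)-j) θ)))
          - G θ * E (-(j:ℤ)) θ) from funext hptw]
    have hc1 : IntervalIntegrable (fun θ : ℝ => (∑ m ∈ Finset.range (N+1),
        (z^m * (G θ * E (-(j:ℤ)-m) θ) + ((starRingEnd ℂ) z)^m * (G θ * E ((m:ℤ)-j) θ)))) volume 0 (2*π) := by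
      apply Continuous.intervalIntegrable
      apply continuous_finset_sum
      intro m _
      exact (continuous_const.mul (hGcont.mul (hEcont _))).add (continuous_const.mul (hGcont.mul (hEcont _)))
    rw [intervalIntegral.integral_sub hc1 (hint _)]
    rw [intervalIntegral.integral_finset_sum (fun m hm => ((hint _).const_mul _).add ((hint _).const_mul _))]
    have hterm : ∀ m ∈ Finset.range (N+1),
        (∫ θ in (0:ℝ)..(2*π), (z^m * (G θ * E (-(j:ℤ)-m) θ) + ((starRingEnd ℂ) z)^m * (G θ * E ((m:ℤ)-j) θ)))
        = (2*π:ℝ) * (c (j+m) * (r:ℂ)^(j+m) * z^m)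
          + ((starRingEnd ℂ) z)^m * ((2*π:ℝ) * (if 0 ≤ (j:ℤ)-m then c ((j:ℤ)-m).toNat * (r:ℂ)^(((j:ℤ)-m).toNat) else 0)) := by
      intro m _
      rw [intervalIntegral.integral_add ((hint _).const_mul _) ((hint _).const_mul _),
        intervalIntegral.integral_const_mul, intervalIntegral.integral_const_mul,
        hJ, hJ]
      have h1 : (-(-(j:ℤ)-m)).toNat = j + m := by omega
      rw [if_pos (by omega : (0:ℤ) ≤ -(-(j:ℤ)-m)), h1]
      have h2 : (-((m:ℤ)-j)) = (j:ℤ) - m := by ring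
      rw [h2]
      ring
    rw [Finset.sum_congr rfl hterm]
    rw [Finset.sum_add_distrib]
    have hsecond : (∑ m ∈ Finset.range (N+1),
        ((starRingEnd ℂ) z)^m * ((2*π:ℝ) * (if 0 ≤ (j:ℤ)-m then c ((j:ℤ)-m).toNat * (r:ℂ)^(((j:ℤ)-m).toNat) else 0)))
        = (2*π:ℝ) * (c j * (r:ℂ)^j) := by
      rw [Finset.sum_eq_single 0]
      · simp
      · intro m _ hm0
        by_cases hmj : (0:ℤ) ≤ (j:ℤ) - m
        · rw [if_pos hmj]
          have : c (((j:ℤ)-m).toNat) = 0 := hvan _ (by omega)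
          rw [this]
          simp
        · rw [if_neg hmj]
          simp
      · intro h
        exact absurd (Finset.mem_range.2 (by omega)) h
    rw [hsecond]
    have hlast : (∫ θ in (0:ℝ)..(2*π), G θ * E (-(j:ℤ)) θ) = (2*π:ℝ) * (c j * (r:ℂ)^j) := by
      have h7 : ((-(-(j:ℤ))).toNat) = j := by omega
      rw [hJ, if_pos (by omega : (0:ℤ) ≤ -(-(j:ℤ))), h7]
    rw [hlast, Finset.mul_sum]
    ring
  -- the kernel integrates to 2π
  have hkRint : (∫ θ in (0:ℝ)..(2*π), kR θ) = 2*π := by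
    have hC : (∫ θ in (0:ℝ)..(2*π), ((kR θ : ℝ):ℂ)) = (2*π:ℂ) := by
      rw [show (fun θ : ℝ => ((kR θ : ℝ):ℂ)) = (fun θ : ℝ => (∑ m ∈ Finset.range (N+1),
        ((z * Complex.exp (-(θ:ℂ) * Complex.I))^m
          + ((starRingEnd ℂ) z * Complex.exp ((θ:ℂ) * Complex.I))^m)) - 1) from funext hK]
      have hintP : ∀ m : ℕ, IntervalIntegrable (fun θ:ℝ => (z * Complex.exp (-(θ:ℂ) * Complex.I))^m) volume 0 (2*π) :=
        fun m => (((continuous_const.mul (Complex.continuous_exp.comp (by fun_prop))).pow m)).intervalIntegrable _ _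
      have hintQ : ∀ m : ℕ, IntervalIntegrable (fun θ:ℝ => ((starRingEnd ℂ) z * Complex.exp ((θ:ℂ) * Complex.I))^m) volume 0 (2*π) :=
        fun m => (((continuous_const.mul (Complex.continuous_exp.comp (by fun_prop))).pow m)).intervalIntegrable _ _
      have hc1 : IntervalIntegrable (fun θ : ℝ => (∑ m ∈ Finset.range (N+1),
          ((z * Complex.exp (-(θ:ℂ) * Complex.I))^m
            + ((starRingEnd ℂ) z * Complex.exp ((θ:ℂ) * Complex.I))^m))) volume 0 (2*π) := by
        apply Continuous.intervalIntegrable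
        apply continuous_finset_sum
        intro m _
        exact ((continuous_const.mul (Complex.continuous_exp.comp (by fun_prop))).pow m).add
          (((continuous_const.mul (Complex.continuous_exp.comp (by fun_prop))).pow m))
      rw [intervalIntegral.integral_sub hc1 (intervalIntegrable_const)]
      rw [intervalIntegral.integral_finset_sum (fun m _ => (hintP m).add (hintQ m))]
      have hPm : ∀ m : ℕ, (∫ θ in (0:ℝ)..(2*π), (z * Complex.exp (-(θ:ℂ) * Complex.I))^m)
          = z^m * (if (-(m:ℤ)) = 0 then (2*π:ℂ) else 0) := by
        intro m
        rw [show (fun θ:ℝ => (z * Complex.exp (-(θ:ℂ) * Complex.I))^m)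
            = (fun θ:ℝ => z^m * Complex.exp (((0 - m : ℤ):ℂ) * θ * Complex.I)) from
          funext (fun θ => by rw [← expmul 0 m z θ]; push_cast; simp)]
        rw [intervalIntegral.integral_const_mul, orth]
        norm_num
      have hQm : ∀ m : ℕ, (∫ θ in (0:ℝ)..(2*π), ((starRingEnd ℂ) z * Complex.exp ((θ:ℂ) * Complex.I))^m)
          = ((starRingEnd ℂ) z)^m * (if (m:ℤ) = 0 then (2*π:ℂ) else 0) := by
        intro m
        rw [show (fun θ:ℝ => ((starRingEnd ℂ) z * Complex.exp ((θ:ℂ) * Complex.I))^m)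
            = (fun θ:ℝ => ((starRingEnd ℂ) z)^m * Complex.exp (((0 + m : ℤ):ℂ) * θ * Complex.I)) from
          funext (fun θ => by rw [← expmul' 0 m ((starRingEnd ℂ) z) θ]; push_cast; simp)]
        rw [intervalIntegral.integral_const_mul, orth]
        norm_num
      have hsum : (∑ m ∈ Finset.range (N+1),
          ((∫ θ in (0:ℝ)..(2*π), (z * Complex.exp (-(θ:ℂ) * Complex.I))^m)
           + (∫ θ in (0:ℝ)..(2*π), ((starRingEnd ℂ) z * Complex.exp ((θ:ℂ) * Complex.I))^m)))
          = (2*π:ℂ) + (2*π:ℂ) := by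
        rw [Finset.sum_eq_single 0]
        · rw [hPm, hQm]; norm_num
        · intro m _ hm0
          rw [hPm, hQm, if_neg (by omega), if_neg (by omega)]
          simp
        · intro h; exact absurd (Finset.mem_range.2 (by omega)) h
      have : (∑ m ∈ Finset.range (N+1), (∫ θ in (0:ℝ)..(2*π),
          ((z * Complex.exp (-(θ:ℂ) * Complex.I))^m + ((starRingEnd ℂ) z * Complex.exp ((θ:ℂ) * Complex.I))^m)))
          = (2*π:ℂ) + (2*π:ℂ) := by
        rw [← hsum]
        apply Finset.sum_congr rfl
        intro m _
        rw [intervalIntegral.integral_add (hintP m) (hintQ m)]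
      rw [this]
      rw [intervalIntegral.integral_const, Complex.real_smul]
      push_cast
      ring
    have := intervalIntegral.integral_ofReal (f := kR) (a := (0:ℝ)) (b := 2*π) (μ := volume)
    rw [this] at hC
    exact_mod_cast hC
  -- norm bound
  have hnnint : 0 ≤ ∫ θ in (0:ℝ)..(2*π), r^j * kR θ :=
    intervalIntegral.integral_nonneg (by positivity)
      (fun θ _ => mul_nonneg (by positivity) (hpos θ))
  have hbound : ‖∫ θ in (0:ℝ)..(2*π), G θ * E (-(j:ℤ)) θ * ((kR θ : ℝ) : ℂ)‖
      ≤ ∫ θ in (0:ℝ)..(2*π), r^j * kR θ := by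
    rw [← _root_.abs_of_nonneg hnnint]
    apply intervalIntegral.norm_integral_le_abs_of_norm_le
    · apply Filter.Eventually.of_forall
      intro θ
      rw [norm_mul, norm_mul]
      have hE1 : ‖E (-(j:ℤ)) θ‖ = 1 := by
        rw [hE]; exact Enorm _ _
      rw [hE1, mul_one, Complex.norm_real, Real.norm_of_nonneg (hpos θ)]
      exact mul_le_mul_of_nonneg_right (normPhiPow hs r hr0 hr1 θ) (hpos θ)
    · exact (continuous_const.mul hkRcont).intervalIntegrable _ _
  rw [hIdent] at hbound
  rw [intervalIntegral.integral_const_mul, hkRint] at hbound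
  rw [norm_mul, Complex.norm_real, Real.norm_of_nonneg (by positivity : (0:ℝ) ≤ 2*π)] at hbound
  nlinarith [hbound, h2π, norm_nonneg (∑ m ∈ Finset.range (N+1), c (j+m) * (r:ℂ)^(j+m) * z^m)]

lemma sectionBound {φ : ℂ → ℂ} {j : ℕ} {c : ℕ → ℂ}
    (hφ : ∀ z : ℂ, ‖z‖ < 1 → HasSum (fun n => c n * z ^ n) (φ z ^ j))
    (hs : ∀ w : ℂ, ‖w‖ < 1 → ‖φ w‖ ≤ ‖w‖)
    (hvan : ∀ ν : ℕ, ν < j → c ν = 0)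
    (hco : ContinuousOn φ (Metric.ball (0:ℂ) 1))
    (N : ℕ) (z : ℂ) (hz : ‖z‖ ≤ 1/2) :
    ‖∑ m ∈ Finset.range (N+1), c (j+m) * z^m‖ ≤ 1 := by
  set f : ℝ → ℝ := fun r => ‖∑ m ∈ Finset.range (N+1), c (j+m) * (r:ℂ)^(j+m) * z^m‖ with hf
  have hcont : Continuous f := by
    rw [hf]
    apply Continuous.norm
    apply continuous_finset_sum
    intro m _
    fun_prop
  set u : ℕ → ℝ := fun i => 1 - 1/(i+2) with hu
  have hui : ∀ i : ℕ, 0 < u i ∧ u i < 1 := by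
    intro i
    have h2 : (0:ℝ) < (i:ℝ)+2 := by positivity
    have h3 : 1/((i:ℝ)+2) ≤ 1/2 := by
      apply one_div_le_one_div_of_le <;> [norm_num; linarith [Nat.cast_nonneg (α := ℝ) i]]
    have h4 : 0 < 1/((i:ℝ)+2) := by positivity
    constructor
    · rw [hu]; simp only; linarith
    · rw [hu]; simp only; linarith
  have hutend : Filter.Tendsto u Filter.atTop (nhds 1) := by
    have h5 : Filter.Tendsto (fun i : ℕ => 1/((i:ℝ)+2)) Filter.atTop (nhds 0) := by
      have h6 := Filter.Tendsto.comp (tendsto_one_div_atTop_nhds_zero_nat (𝕜 := ℝ)) (Filter.tendsto_add_atTop_nat 2)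
      convert h6 using 1
      funext m
      simp only [Function.comp_apply]
      push_cast; ring
    have := Filter.Tendsto.sub (tendsto_const_nhds (x := (1:ℝ))) h5
    rw [sub_zero] at this
    exact this
  have hftend : Filter.Tendsto (fun i => f (u i)) Filter.atTop (nhds (f 1)) :=
    (hcont.continuousAt.tendsto).comp hutend
  have hf1 : f 1 = ‖∑ m ∈ Finset.range (N+1), c (j+m) * z^m‖ := by
    rw [hf]
    simp
  rw [← hf1]
  apply le_of_tendsto hftend
  apply Filter.Eventually.of_forall
  intro i
  calc f (u i) ≤ (u i)^j := mainEst hφ hs hvan hco N z hz (u i) (hui i).1 (hui i).2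
    _ ≤ 1 := pow_le_one₀ (hui i).1.le (hui i).2.le

/-- Sections of powers of a Schwarz function: if `φ^j(z) = Σ cₙ zⁿ`, then each
section satisfies `|s_k(z; φ^j)| ≤ |z|^j` for `|z| ≤ 1/2`. -/
theorem rogosinski_schwarz_pow (φ : ℂ → ℂ) (j : ℕ) (hj : 1 ≤ j) (c : ℕ → ℂ)
    (hφ : ∀ z : ℂ, ‖z‖ < 1 → HasSum (fun n => c n * z ^ n) (φ z ^ j))
    (h0 : φ 0 = 0)
    (hb : ∀ z : ℂ, ‖z‖ < 1 → ‖φ z‖ ≤ 1)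
    (hanalytic : AnalyticOnNhd ℂ φ (Metric.ball (0 : ℂ) 1))
    (k : ℕ) (z : ℂ) (hz : ‖z‖ ≤ 1 / 2) :
    ‖∑ n ∈ Finset.range (k + 1), c n * z ^ n‖ ≤ ‖z‖ ^ j := by
  have hs := schwarzBound h0 hb hanalytic
  have hvan := vanish hφ hs
  have hco : ContinuousOn φ (Metric.ball (0:ℂ) 1) := hanalytic.continuousOn
  by_cases hk : k + 1 ≤ j
  · have hzero : ∑ n ∈ Finset.range (k+1), c n * z^n = 0 := by
      apply Finset.sum_eq_zero
      intro n hn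
      rw [hvan n (by have := Finset.mem_range.1 hn; omega), zero_mul]
    rw [hzero, norm_zero]
    positivity
  · push_neg at hk
    set N := k - j with hN
    rw [show k + 1 = j + (N+1) by omega, Finset.sum_range_add]
    have hfirst : ∑ n ∈ Finset.range j, c n * z^n = 0 := by
      apply Finset.sum_eq_zero
      intro n hn
      rw [hvan n (Finset.mem_range.1 hn), zero_mul]
    rw [hfirst, zero_add]
    have hfact : ∑ m ∈ Finset.range (N+1), c (j+m) * z^(j+m)
        = z^j * ∑ m ∈ Finset.range (N+1), c (j+m) * z^m := by
      rw [Finset.mul_sum]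
      apply Finset.sum_congr rfl
      intro m _
      rw [pow_add]
      ring
    rw [hfact, norm_mul, norm_pow]
    calc ‖z‖^j * ‖∑ m ∈ Finset.range (N+1), c (j+m) * z^m‖
        ≤ ‖z‖^j * 1 := by
          apply mul_le_mul_of_nonneg_left (sectionBound hφ hs hvan hco N z hz) (by positivity)
      _ = ‖z‖^j := mul_one _

end RogosinskiAux
end

section
/- If f(z) = Σ aₙzⁿ is subordinate to h(z) = Σ bₙzⁿ in the unit disk, then for every k ≥ 0 and all |z| ≤ 1/2, |Σ_{n=0}^k aₙ zⁿ| ≤ Σ_{n=0}^k |bₙ| |z|ⁿ. -/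
open Complex MeasureTheory Finset Metric Filter Set intervalIntegral
open scoped Real Topology NNReal

lemma rog_re_geom_sum_ge (N : ℕ) (ζ : ℂ) (hζ : ‖ζ‖ ≤ 1/2) :
    (1/2 : ℝ) ≤ (∑ j ∈ Finset.range (N+1), ζ^j).re := by
  rcases Nat.eq_zero_or_pos N with hN | hN
  · subst hN; simp; norm_num
  have hζ1 : ζ ≠ 1 := by intro h; rw [h] at hζ; norm_num at hζ
  have hv : (1 : ℂ) - ζ ≠ 0 := by intro h; apply hζ1; linear_combination -h
  have hgeom : (∑ j ∈ Finset.range (N+1), ζ^j) = (1 - ζ^(N+1)) / (1 - ζ) := by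
    have := geom_sum_mul ζ (N+1)
    field_simp
    linear_combination -this
  rw [hgeom]
  set u : ℂ := 1 + ζ - 2*ζ^(N+1) with hu
  set v : ℂ := 2*(1-ζ) with hvv
  have hv0 : v ≠ 0 := by simp [hvv, hv]
  have key : (1 - ζ^(N+1)) / (1 - ζ) - 1/2 = u / v := by
    rw [hu, hvv]; field_simp; ring
  have hw : (starRingEnd ℂ) v = 2*(1 - (starRingEnd ℂ) ζ) := by
    rw [hvv]; simp [map_mul, map_sub, map_one, map_ofNat]
  have expand : u * (starRingEnd ℂ) v
      = 2*(1 - (starRingEnd ℂ) ζ) + 2*(ζ - (Complex.normSq ζ : ℂ))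
        - 4*(ζ^(N+1) * (1 - (starRingEnd ℂ) ζ)) := by
    rw [hw, hu]
    linear_combination (-2:ℂ) * Complex.mul_conj ζ
  have hre1 : (u * (starRingEnd ℂ) v).re
      = 2 - 2 * Complex.normSq ζ - 4 * (ζ^(N+1) * (1 - (starRingEnd ℂ) ζ)).re := by
    rw [expand]
    simp [Complex.add_re, Complex.sub_re, Complex.mul_re]
    ring
  -- bounds
  have hns : Complex.normSq ζ ≤ 1/4 := by
    have : Complex.normSq ζ = ‖ζ‖^2 := by rw [Complex.normSq_eq_norm_sq]
    rw [this]
    nlinarith [norm_nonneg ζ]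
  have hnorm1 : ‖(1 : ℂ) - (starRingEnd ℂ) ζ‖ ≤ 3/2 := by
    calc ‖(1:ℂ) - (starRingEnd ℂ) ζ‖ ≤ ‖(1:ℂ)‖ + ‖(starRingEnd ℂ) ζ‖ := norm_sub_le _ _
    _ ≤ 3/2 := by rw [norm_one, RCLike.norm_conj]; linarith
  have hpow : ‖ζ^(N+1)‖ ≤ 1/4 := by
    rw [norm_pow]
    calc ‖ζ‖^(N+1) ≤ (1/2:ℝ)^(N+1) := pow_le_pow_left₀ (norm_nonneg _) hζ _
    _ ≤ (1/2:ℝ)^2 := by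
        apply pow_le_pow_of_le_one (by norm_num) (by norm_num)
        omega
    _ = 1/4 := by norm_num
  have hre2 : (ζ^(N+1) * (1 - (starRingEnd ℂ) ζ)).re ≤ 3/8 := by
    calc (ζ^(N+1) * (1 - (starRingEnd ℂ) ζ)).re ≤ ‖ζ^(N+1) * (1 - (starRingEnd ℂ) ζ)‖ :=
      Complex.re_le_norm _
    _ = ‖ζ^(N+1)‖ * ‖(1:ℂ) - (starRingEnd ℂ) ζ‖ := norm_mul _ _
    _ ≤ (1/4) * (3/2) := by
        apply mul_le_mul hpow hnorm1 (norm_nonneg _) (by norm_num)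
    _ = 3/8 := by norm_num
  have hE : 0 ≤ (u * (starRingEnd ℂ) v).re := by rw [hre1]; linarith
  have hdiv : (u / v).re = (u * (starRingEnd ℂ) v).re / Complex.normSq v := by
    have h5 : u / v = u * (starRingEnd ℂ) v / ((Complex.normSq v : ℝ) : ℂ) := by
      rw [eq_div_iff (by exact_mod_cast (Complex.normSq_pos.mpr hv0).ne'), ← Complex.mul_conj v]
      field_simp
    rw [h5, Complex.div_ofReal_re]
  have hfinal : 0 ≤ ((1 - ζ^(N+1)) / (1 - ζ) - 1/2).re := by
    rw [key, hdiv]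
    exact div_nonneg hE (Complex.normSq_nonneg v)
  have : ((1 - ζ^(N+1)) / (1 - ζ) - 1/2).re = ((1 - ζ^(N+1)) / (1 - ζ)).re - 1/2 := by
    simp
  linarith

lemma rog_int_exp (n : ℤ) :
    (∫ t in (0:ℝ)..(2*π), Complex.exp ((n:ℂ) * t * Complex.I)) = if n = 0 then (2*π : ℂ) else 0 := by
  rcases eq_or_ne n 0 with h | h
  · subst h; simp [Complex.ofReal_mul]
  · rw [if_neg h]
    have h1 : ∀ t : ℝ, (n:ℂ) * t * Complex.I = ((n:ℂ) * Complex.I) * t := fun t => by ring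
    simp_rw [h1]
    rw [integral_exp_mul_complex (by simp [Complex.ext_iff, h])]
    have : ((n:ℂ) * Complex.I) * ((2*π : ℝ):ℂ) = (n:ℂ) * (2 * π * Complex.I) := by push_cast; ring
    rw [this, Complex.exp_int_mul_two_pi_mul_I]
    simp

noncomputable def rogKer (z : ℂ) (N : ℕ) (t : ℝ) : ℝ :=
  2 * (∑ j ∈ Finset.range (N+1), (z * Complex.exp (-(t:ℂ) * Complex.I))^j).re - 1

lemma rogKer_nonneg {z : ℂ} (hz : ‖z‖ ≤ 1/2) (N : ℕ) (t : ℝ) : 0 ≤ rogKer z N t := by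
  have h1 : ‖z * Complex.exp (-(t:ℂ) * Complex.I)‖ ≤ 1/2 := by
    rw [norm_mul]
    have : -(t:ℂ) * Complex.I = ((-t : ℝ) : ℂ) * Complex.I := by push_cast; ring
    rw [this]
    rw [show ‖Complex.exp (((-t : ℝ) : ℂ) * Complex.I)‖ = 1 from Complex.norm_exp_ofReal_mul_I _]
    simpa using hz
  have := rog_re_geom_sum_ge N _ h1
  unfold rogKer; linarith

lemma rogKer_continuous (z : ℂ) (N : ℕ) : Continuous (rogKer z N) := by
  unfold rogKer
  apply Continuous.sub _ continuous_const
  apply Continuous.mul continuous_const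
  apply Complex.continuous_re.comp
  apply continuous_finset_sum
  intro j _
  apply Continuous.pow
  apply Continuous.mul continuous_const
  apply Complex.continuous_exp.comp
  fun_prop

lemma rogKer_eq (z : ℂ) (N : ℕ) (t : ℝ) : ((rogKer z N t : ℝ) : ℂ) =
    ∑ j ∈ Finset.range (N+1),
      (z^j * Complex.exp (-(j:ℂ) * t * Complex.I)
        + (starRingEnd ℂ) z^j * Complex.exp ((j:ℂ) * t * Complex.I)) - 1 := by
  unfold rogKer
  push_cast
  set S := ∑ j ∈ Finset.range (N+1), (z * Complex.exp (-(t:ℂ) * Complex.I))^j with hS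
  have h1 : 2 * (S.re : ℂ) = S + (starRingEnd ℂ) S := by
    rw [Complex.add_conj]; push_cast; ring
  have h2 : S + (starRingEnd ℂ) S = ∑ j ∈ Finset.range (N+1),
      (z^j * Complex.exp (-(j:ℂ) * t * Complex.I)
        + (starRingEnd ℂ) z^j * Complex.exp ((j:ℂ) * t * Complex.I)) := by
    rw [hS, map_sum, ← Finset.sum_add_distrib]
    apply Finset.sum_congr rfl
    intro j _
    have e2 : (starRingEnd ℂ) (Complex.exp (-(t:ℂ) * Complex.I)) = Complex.exp ((t:ℂ) * Complex.I) := by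
      rw [← Complex.exp_conj]
      congr 1
      rw [map_mul, map_neg, Complex.conj_ofReal, Complex.conj_I]
      ring
    rw [mul_pow, map_mul, map_pow, map_pow, e2, ← Complex.exp_nat_mul, ← Complex.exp_nat_mul]
    congr 2 <;> ring
  rw [← h2]
  linear_combination h1

lemma rogKer_ortho (z : ℂ) (N m : ℕ) :
    (∫ t in (0:ℝ)..(2*π), Complex.exp ((m:ℂ)*t*Complex.I) * ((rogKer z N t : ℝ) : ℂ))
      = (2*π) * (if m ≤ N then z^m else 0) := by
  have contExp : ∀ c : ℤ, Continuous fun t : ℝ => Complex.exp ((c:ℂ)*t*Complex.I) := by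
    intro c
    apply Complex.continuous_exp.comp
    fun_prop
  have mulExp : ∀ (c d : ℂ) (t : ℝ), Complex.exp (c*(t:ℂ)*Complex.I) * Complex.exp (d*(t:ℂ)*Complex.I)
      = Complex.exp ((c+d)*(t:ℂ)*Complex.I) := by
    intro c d t; rw [← Complex.exp_add]; ring_nf
  have key : ∀ t : ℝ, Complex.exp ((m:ℂ)*t*Complex.I) * ((rogKer z N t : ℝ) : ℂ)
      = (∑ j ∈ Finset.range (N+1),
          (z^j * Complex.exp ((((m:ℤ)-(j:ℤ) : ℤ):ℂ)*t*Complex.I)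
            + (starRingEnd ℂ) z^j * Complex.exp ((((m:ℤ)+(j:ℤ) : ℤ):ℂ)*t*Complex.I)))
        - Complex.exp ((((m:ℤ)):ℂ)*t*Complex.I) := by
    intro t
    rw [rogKer_eq, mul_sub, mul_one, Finset.mul_sum]
    congr 1
    · apply Finset.sum_congr rfl; intro j _
      rw [mul_add]
      congr 1
      · rw [show Complex.exp ((m:ℂ)*t*Complex.I) * (z^j * Complex.exp (-(j:ℂ)*t*Complex.I))
            = z^j * (Complex.exp ((m:ℂ)*t*Complex.I) * Complex.exp (-(j:ℂ)*t*Complex.I)) by ring,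
          mulExp]
        congr 2
        push_cast; ring
      · rw [show Complex.exp ((m:ℂ)*t*Complex.I) * ((starRingEnd ℂ) z^j * Complex.exp ((j:ℂ)*t*Complex.I))
            = (starRingEnd ℂ) z^j * (Complex.exp ((m:ℂ)*t*Complex.I) * Complex.exp ((j:ℂ)*t*Complex.I)) by ring,
          mulExp]
        congr 2
        push_cast; ring
  simp only [key]
  have int1 : ∀ j : ℕ, IntervalIntegrable (fun t : ℝ =>
      z^j * Complex.exp ((((m:ℤ)-(j:ℤ) : ℤ):ℂ)*t*Complex.I)
        + (starRingEnd ℂ) z^j * Complex.exp ((((m:ℤ)+(j:ℤ) : ℤ):ℂ)*t*Complex.I)) volume 0 (2*π) :=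
    fun j => ((continuous_const.mul (contExp _)).add (continuous_const.mul (contExp _))).intervalIntegrable _ _
  have intSum : IntervalIntegrable (fun t : ℝ => ∑ j ∈ Finset.range (N+1),
      (z^j * Complex.exp ((((m:ℤ)-(j:ℤ) : ℤ):ℂ)*t*Complex.I)
        + (starRingEnd ℂ) z^j * Complex.exp ((((m:ℤ)+(j:ℤ) : ℤ):ℂ)*t*Complex.I))) volume 0 (2*π) :=
    (continuous_finset_sum _ (fun j _ => (continuous_const.mul (contExp _)).add
      (continuous_const.mul (contExp _)))).intervalIntegrable _ _
  rw [intervalIntegral.integral_sub intSum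
      ((contExp ((m:ℤ))).intervalIntegrable _ _),
    intervalIntegral.integral_finset_sum (fun j _ => int1 j)]
  have hadd : ∀ j : ℕ, (∫ t in (0:ℝ)..(2*π), z^j * Complex.exp ((((m:ℤ)-(j:ℤ) : ℤ):ℂ)*t*Complex.I)
        + (starRingEnd ℂ) z^j * Complex.exp ((((m:ℤ)+(j:ℤ) : ℤ):ℂ)*t*Complex.I))
      = (∫ t in (0:ℝ)..(2*π), z^j * Complex.exp ((((m:ℤ)-(j:ℤ) : ℤ):ℂ)*t*Complex.I))
        + ∫ t in (0:ℝ)..(2*π), (starRingEnd ℂ) z^j * Complex.exp ((((m:ℤ)+(j:ℤ) : ℤ):ℂ)*t*Complex.I) :=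
    fun j => intervalIntegral.integral_add
      ((continuous_const.mul (contExp _)).intervalIntegrable _ _)
      ((continuous_const.mul (contExp _)).intervalIntegrable _ _)
  simp_rw [hadd,
    intervalIntegral.integral_const_mul, rog_int_exp]
  rcases Nat.eq_zero_or_pos m with hm | hm
  · subst hm
    rw [Finset.sum_eq_single_of_mem 0 (Finset.mem_range.mpr (Nat.succ_pos N))]
    · norm_num
    · intro j _ hj
      have h1 : ((0:ℕ):ℤ) - (j:ℤ) ≠ 0 := by omega
      have h2 : ((0:ℕ):ℤ) + (j:ℤ) ≠ 0 := by omega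
      rw [if_neg h1, if_neg h2]
      ring
  · have hm' : ((m:ℤ)) ≠ 0 := by omega
    rw [if_neg hm', sub_zero]
    have hterm : ∀ j ∈ Finset.range (N+1),
        (z^j * (if ((m:ℤ) - (j:ℤ) : ℤ) = 0 then (2*π:ℂ) else 0)
          + (starRingEnd ℂ) z^j * (if ((m:ℤ) + (j:ℤ) : ℤ) = 0 then (2*π:ℂ) else 0))
        = if j = m then z^j * (2*π:ℂ) else 0 := by
      intro j _
      have h2 : ((m:ℤ)) + (j:ℤ) ≠ 0 := by omega
      rw [if_neg h2, mul_zero, add_zero]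
      rcases eq_or_ne j m with rfl | hne
      · rw [if_pos (by omega), if_pos rfl]
      · rw [if_neg (by omega), if_neg hne, mul_zero]
    rw [Finset.sum_congr rfl hterm, Finset.sum_ite_eq' (Finset.range (N+1)) m]
    by_cases h : m ≤ N
    · rw [if_pos (Finset.mem_range.mpr (Nat.lt_succ_of_le h)), if_pos h]; ring
    · rw [if_neg (fun hc => h (Nat.lt_succ_iff.mp (Finset.mem_range.mp hc))), if_neg h, mul_zero]

lemma rogKer_int (z : ℂ) (N : ℕ) (hz : ‖z‖ ≤ 1/2) :
    ∫ t in (0:ℝ)..(2*π), rogKer z N t = 2*π := by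
  have h := rogKer_ortho z N 0
  simp only [Nat.cast_zero, zero_mul, Complex.exp_zero, one_mul, pow_zero, Nat.zero_le, if_true,
    mul_one] at h
  rw [intervalIntegral.integral_ofReal] at h
  exact_mod_cast h

lemma rog_swap {z : ℂ} (hz : ‖z‖ ≤ 1/2) (N n : ℕ) {r : ℝ} (hr0 : 0 < r)
    (e : ℕ → ℂ) (he : Summable fun m => ‖e m‖ * r^m)
    (G : ℝ → ℂ)
    (hG : ∀ t : ℝ, HasSum (fun m => e m * ((r:ℂ) * Complex.exp ((t:ℂ)*Complex.I))^m) (G t)) :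
    ∫ t in (0:ℝ)..(2*π), Complex.exp ((n:ℂ)*t*Complex.I) * G t * ((rogKer z N t : ℝ):ℂ)
      = (2*π) * ∑ m ∈ Finset.range (N+1-n), e m * ((r:ℂ))^m * z^(n+m) := by
  have h2π : (0:ℝ) ≤ 2*π := by positivity
  set μ := volume.restrict (Set.Ioc (0:ℝ) (2*π)) with hμ
  set F : ℕ → ℝ → ℂ := fun m t => e m * ((r:ℂ)^m) *
    (Complex.exp (((n+m : ℕ):ℂ)*t*Complex.I) * ((rogKer z N t : ℝ):ℂ)) with hF
  have hFeq : ∀ m t, F m t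
      = (e m * ((r:ℂ) * Complex.exp ((t:ℂ)*Complex.I))^m)
        * (Complex.exp ((n:ℂ)*t*Complex.I) * ((rogKer z N t : ℝ):ℂ)) := by
    intro m t
    rw [hF]
    simp only
    have h5 : Complex.exp (((n+m : ℕ):ℂ)*(t:ℂ)*Complex.I)
        = Complex.exp ((n:ℂ)*(t:ℂ)*Complex.I) * Complex.exp ((m:ℂ)*((t:ℂ)*Complex.I)) := by
      rw [← Complex.exp_add]; congr 1; push_cast; ring
    rw [h5, mul_pow, ← Complex.exp_nat_mul]
    ring
  have hcont : ∀ m : ℕ, Continuous (F m) := by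
    intro m
    apply Continuous.mul continuous_const
    apply Continuous.mul
    · apply Complex.continuous_exp.comp; fun_prop
    · exact Complex.continuous_ofReal.comp (rogKer_continuous z N)
  have hFint : ∀ m : ℕ, Integrable (F m) μ := fun m => (hcont m).integrableOn_Ioc
  have hnorm : ∀ m : ℕ, (∫ t, ‖F m t‖ ∂μ) = ‖e m‖ * r^m * (2*π) := by
    intro m
    have h1 : ∀ t : ℝ, ‖F m t‖ = (‖e m‖ * r^m) * rogKer z N t := by
      intro t
      rw [hF]
      simp only [norm_mul]
      have e1 : ‖Complex.exp (((n+m : ℕ):ℂ)*(t:ℂ)*Complex.I)‖ = 1 := by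
        rw [show (((n+m : ℕ):ℂ))*(t:ℂ)*Complex.I = (((((n+m:ℕ)) * t : ℝ)):ℂ)*Complex.I by push_cast; ring]
        exact Complex.norm_exp_ofReal_mul_I _
      rw [e1, one_mul, Complex.norm_real, Real.norm_of_nonneg (rogKer_nonneg hz N t),
        norm_pow, Complex.norm_real, Real.norm_of_nonneg hr0.le]
    simp_rw [h1]
    rw [MeasureTheory.integral_const_mul]
    have : ∫ t, rogKer z N t ∂μ = 2*π := by
      rw [← rogKer_int z N hz, intervalIntegral.integral_of_le h2π]
    rw [this]
  have hsumnorm : Summable (fun m => ∫ t, ‖F m t‖ ∂μ) := by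
    simp_rw [hnorm]
    exact he.mul_right _
  have hkey := MeasureTheory.hasSum_integral_of_summable_integral_norm hFint hsumnorm
  have htsum : ∀ t : ℝ, (∑' m, F m t)
      = Complex.exp ((n:ℂ)*t*Complex.I) * G t * ((rogKer z N t : ℝ):ℂ) := by
    intro t
    have h3 := (hG t).mul_right (Complex.exp ((n:ℂ)*t*Complex.I) * ((rogKer z N t : ℝ):ℂ))
    have h4 : (fun m => (e m * ((r:ℂ) * Complex.exp ((t:ℂ)*Complex.I))^m)
        * (Complex.exp ((n:ℂ)*t*Complex.I) * ((rogKer z N t : ℝ):ℂ))) = fun m => F m t := by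
      funext m; rw [hFeq]
    rw [h4] at h3
    rw [h3.tsum_eq]
    ring
  have hint : ∀ m : ℕ, (∫ t, F m t ∂μ)
      = e m * ((r:ℂ))^m * ((2*π) * (if n+m ≤ N then z^(n+m) else 0)) := by
    intro m
    rw [hF]
    simp only
    rw [MeasureTheory.integral_const_mul, ← intervalIntegral.integral_of_le h2π,
      rogKer_ortho z N (n+m)]
  simp_rw [hint] at hkey
  have hfin : HasSum (fun m => e m * ((r:ℂ))^m * ((2*π) * (if n+m ≤ N then z^(n+m) else 0)))
      (∑ m ∈ Finset.range (N+1-n), e m * ((r:ℂ))^m * ((2*π) * (if n+m ≤ N then z^(n+m) else 0))) := by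
    apply hasSum_sum_of_ne_finset_zero
    intro m hm
    rw [Finset.mem_range, not_lt] at hm
    have hc : ¬ (n + m ≤ N) := by omega
    rw [if_neg hc, mul_zero, mul_zero]
  have heq : (∑ m ∈ Finset.range (N+1-n), e m * ((r:ℂ))^m * ((2*π) * (if n+m ≤ N then z^(n+m) else 0)))
      = (2*π) * ∑ m ∈ Finset.range (N+1-n), e m * ((r:ℂ))^m * z^(n+m) := by
    rw [Finset.mul_sum]
    apply Finset.sum_congr rfl
    intro m hm
    rw [Finset.mem_range] at hm
    rw [if_pos (by omega)]
    ring
  rw [heq] at hfin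
  simp_rw [htsum] at hkey
  rw [intervalIntegral.integral_of_le h2π]
  exact hkey.unique hfin

lemma rog_geo (e : ℕ → ℂ) (G : ℂ → ℂ) (hG : ∀ w : ℂ, ‖w‖ < 1 → HasSum (fun m => e m * w^m) (G w))
    (r : ℝ) (hr0 : 0 ≤ r) (hr1 : r < 1) : Summable fun m => ‖e m‖ * r^m := by
  set ρ : ℝ := (r+1)/2 with hρdef
  have hρ1 : r < ρ := by rw [hρdef]; linarith
  have hρ2 : ρ < 1 := by rw [hρdef]; linarith
  have hρ0 : 0 < ρ := by rw [hρdef]; linarith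
  have h1 := (hG ((ρ:ℝ):ℂ) (by rw [Complex.norm_real, Real.norm_of_nonneg hρ0.le]; exact hρ2)).summable
  have h3 : Filter.Tendsto (fun m => ‖e m * ((ρ:ℝ):ℂ)^m‖) atTop (𝓝 0) := by
    simpa using h1.tendsto_atTop_zero.norm
  have h4 : ∀ᶠ m in atTop, ‖e m * ((ρ:ℝ):ℂ)^m‖ < 1 := by
    have := h3.eventually (eventually_lt_nhds (show (0:ℝ) < 1 by norm_num))
    simpa using this
  apply Summable.of_norm_bounded_eventually_nat (g := fun m => (r/ρ)^m)
    (summable_geometric_of_lt_one (div_nonneg hr0 hρ0.le) (by rw [div_lt_one hρ0]; exact hρ1))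
  filter_upwards [h4] with m hm
  have hnm : ‖e m * ((ρ:ℝ):ℂ)^m‖ = ‖e m‖ * ρ^m := by
    rw [norm_mul, norm_pow, Complex.norm_real, Real.norm_of_nonneg hρ0.le]
  rw [hnm] at hm
  rw [Real.norm_of_nonneg (by positivity)]
  have hrr : r ^ m = ρ^m * (r/ρ)^m := by
    have h7 : ρ ≠ 0 := hρ0.ne'
    rw [mul_comm, ← mul_pow, div_mul_cancel₀ _ h7]
  rw [hrr, ← mul_assoc]
  calc (‖e m‖ * ρ^m) * (r/ρ)^m ≤ 1 * (r/ρ)^m := by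
        apply mul_le_mul_of_nonneg_right hm.le (by positivity)
  _ = (r/ρ)^m := one_mul _

lemma rog_section_bound {z : ℂ} (hz : ‖z‖ ≤ 1/2) (N : ℕ) (e : ℕ → ℂ) (G : ℂ → ℂ)
    (hG : ∀ w : ℂ, ‖w‖ < 1 → HasSum (fun m => e m * w^m) (G w))
    (hGb : ∀ w : ℂ, ‖w‖ < 1 → ‖G w‖ ≤ 1) :
    ‖∑ m ∈ Finset.range (N+1), e m * z^m‖ ≤ 1 := by
  have h2π : (0:ℝ) < 2*π := by positivity
  have step : ∀ r : ℝ, 0 < r → r < 1 →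
      ‖∑ m ∈ Finset.range (N+1), e m * ((r:ℂ))^m * z^m‖ ≤ 1 := by
    intro r h0 h1
    have hwlt : ∀ t : ℝ, ‖(r:ℂ) * Complex.exp ((t:ℂ)*Complex.I)‖ < 1 := by
      intro t
      rw [norm_mul, Complex.norm_real, Real.norm_of_nonneg h0.le,
        show ‖Complex.exp ((t:ℂ)*Complex.I)‖ = 1 from Complex.norm_exp_ofReal_mul_I t, mul_one]
      exact h1
    have hsw := rog_swap hz N 0 h0 e (rog_geo e G hG r h0.le h1)
      (fun t => G ((r:ℂ) * Complex.exp ((t:ℂ)*Complex.I))) (fun t => hG _ (hwlt t))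
    have hb : ‖∫ t in (0:ℝ)..(2*π), Complex.exp (((0:ℕ):ℂ)*t*Complex.I)
        * G ((r:ℂ) * Complex.exp ((t:ℂ)*Complex.I)) * ((rogKer z N t : ℝ):ℂ)‖ ≤ 2*π := by
      have := intervalIntegral.norm_integral_le_abs_of_norm_le (μ := volume)
        (f := fun t : ℝ => Complex.exp (((0:ℕ):ℂ)*t*Complex.I)
          * G ((r:ℂ) * Complex.exp ((t:ℂ)*Complex.I)) * ((rogKer z N t : ℝ):ℂ))
        (g := rogKer z N) (a := 0) (b := 2*π)
        ?_ ((rogKer_continuous z N).intervalIntegrable _ _)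
      · rw [rogKer_int z N hz] at this
        calc ‖_‖ ≤ |2*π| := this
        _ = 2*π := abs_of_pos h2π
      · apply Filter.Eventually.of_forall
        intro t
        rw [norm_mul, norm_mul]
        simp only [Nat.cast_zero, zero_mul, Complex.exp_zero, norm_one, one_mul]
        rw [Complex.norm_real, Real.norm_of_nonneg (rogKer_nonneg hz N t)]
        calc ‖G ((r:ℂ) * Complex.exp ((t:ℂ)*Complex.I))‖ * rogKer z N t
            ≤ 1 * rogKer z N t :=
          mul_le_mul_of_nonneg_right (hGb _ (hwlt t)) (rogKer_nonneg hz N t)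
        _ = rogKer z N t := one_mul _
    rw [hsw] at hb
    rw [norm_mul] at hb
    have hn2 : ‖(2:ℂ) * (π:ℝ)‖ = 2*π := by
      rw [norm_mul, Complex.norm_real, Real.norm_of_nonneg Real.pi_nonneg]
      norm_num
    rw [hn2] at hb
    simp only [Nat.sub_zero, zero_add] at hb
    exact (mul_le_iff_le_one_right h2π).mp hb
  have tend : Filter.Tendsto (fun r : ℝ => ∑ m ∈ Finset.range (N+1), e m * ((r:ℂ))^m * z^m)
      (𝓝[<] (1:ℝ)) (𝓝 (∑ m ∈ Finset.range (N+1), e m * z^m)) := by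
    have c1 : Continuous (fun r : ℝ => ∑ m ∈ Finset.range (N+1), e m * ((r:ℂ))^m * z^m) := by
      apply continuous_finset_sum; intro m _; fun_prop
    have h6 := (c1.tendsto 1).mono_left (nhdsWithin_le_nhds (s := Set.Iio (1:ℝ)))
    simpa using h6
  apply le_of_tendsto tend.norm
  filter_upwards [Ioo_mem_nhdsLT_of_mem (Set.mem_Ioc.mpr ⟨one_pos, le_refl (1:ℝ)⟩)] with r hr
  exact step r hr.1 hr.2

lemma rog_psi_bound {φ : ℂ → ℂ} (hφ0 : φ 0 = 0) (hφb : ∀ z : ℂ, ‖z‖ < 1 → ‖φ z‖ ≤ 1)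
    (hφd : DifferentiableOn ℂ φ (Metric.ball 0 1)) :
    ∀ w : ℂ, ‖w‖ < 1 → ‖dslope φ 0 w‖ ≤ 1 := by
  intro w hw
  -- step 1: for each r ∈ (‖w‖, 1) and R₂ > 1, Schwarz gives bound R₂ / r
  have step1 : ∀ r : ℝ, ‖w‖ < r → r < 1 → ∀ R₂ : ℝ, 1 < R₂ → ‖dslope φ 0 w‖ ≤ R₂ / r := by
    intro r hr1 hr2 R₂ hR₂
    apply Complex.norm_dslope_le_div_of_mapsTo_ball
      (hφd.mono (Metric.ball_subset_ball hr2.le))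
    · intro x hx
      rw [Metric.mem_ball] at hx
      rw [Metric.mem_closedBall]
      rw [hφ0, dist_zero_right]
      rw [dist_zero_right] at hx
      exact (lt_of_le_of_lt (hφb x (hx.trans hr2)) hR₂).le
    · rw [Metric.mem_ball, dist_zero_right]; exact hr1
  have step2 : ∀ r : ℝ, ‖w‖ < r → r < 1 → ‖dslope φ 0 w‖ * r ≤ 1 := by
    intro r hr1 hr2
    have hr0 : 0 < r := lt_of_le_of_lt (norm_nonneg w) hr1
    by_contra hcon
    push_neg at hcon
    have h5 := step1 r hr1 hr2 ((1 + ‖dslope φ 0 w‖ * r)/2) (by linarith)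
    rw [le_div_iff₀ hr0] at h5
    linarith
  by_contra hcon
  push_neg at hcon
  have hψ0 : 0 < ‖dslope φ 0 w‖ := lt_trans one_pos hcon
  set q : ℝ := max ‖w‖ (1/‖dslope φ 0 w‖) with hq
  have hq1 : q < 1 := by
    rw [hq, max_lt_iff]
    constructor
    · exact hw
    · rw [div_lt_one hψ0]; exact hcon
  set r : ℝ := (q + 1)/2 with hr
  have h1 : ‖w‖ < r := by
    have : ‖w‖ ≤ q := le_max_left _ _
    rw [hr]; linarith
  have h2 : r < 1 := by rw [hr]; linarith
  have h3 : 1/‖dslope φ 0 w‖ < r := by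
    have : 1/‖dslope φ 0 w‖ ≤ q := le_max_right _ _
    rw [hr]; linarith
  have h4 := step2 r h1 h2
  rw [div_lt_iff₀ hψ0] at h3
  linarith [mul_comm (‖dslope φ 0 w‖) r]

lemma rog_coeffs (g : ℂ → ℂ) (hg : DifferentiableOn ℂ g (Metric.ball 0 1)) :
    ∃ d : ℕ → ℂ, ∀ w : ℂ, ‖w‖ < 1 → HasSum (fun m => d m * w^m) (g w) := by
  have hps : ∀ R : ℝ≥0, 0 < R → (R:ℝ) < 1 →
      HasFPowerSeriesOnBall g (cauchyPowerSeries g 0 R) 0 R := by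
    intro R h0 h1
    apply DifferentiableOn.hasFPowerSeriesOnBall _ h0
    apply hg.mono
    intro x hx
    rw [Metric.mem_closedBall] at hx
    rw [Metric.mem_ball]
    exact lt_of_le_of_lt hx h1
  have h₀ := hps (1/2) (by norm_num) (by norm_num)
  refine ⟨fun m => (cauchyPowerSeries g 0 ((1:ℝ≥0)/2)).coeff m, ?_⟩
  intro w hw
  set R : ℝ≥0 := Real.toNNReal ((‖w‖+1)/2) with hR
  have hRval : (R:ℝ) = (‖w‖+1)/2 := by
    rw [hR, Real.coe_toNNReal]
    positivity
  have hR0 : 0 < R := by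
    rw [← NNReal.coe_lt_coe, hRval]; positivity
  have hR1 : (R:ℝ) < 1 := by rw [hRval]; linarith [norm_nonneg w]
  have hq := hps R hR0 hR1
  have hpq : cauchyPowerSeries g 0 ((1:ℝ≥0)/2) = cauchyPowerSeries g 0 R :=
    h₀.hasFPowerSeriesAt.eq_formalMultilinearSeries hq.hasFPowerSeriesAt
  have hmem : w ∈ Metric.eball (0:ℂ) R := by
    rw [mem_emetric_ball_zero_iff, enorm_eq_nnnorm, ENNReal.coe_lt_coe, ← NNReal.coe_lt_coe, coe_nnnorm, hRval]
    linarith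
  have hs := hq.hasSum hmem
  rw [zero_add] at hs
  have : (fun m => (cauchyPowerSeries g 0 R) m fun _ => w)
      = fun m => (cauchyPowerSeries g 0 ((1:ℝ≥0)/2)).coeff m * w^m := by
    funext m
    rw [FormalMultilinearSeries.apply_eq_pow_smul_coeff, hpq, smul_eq_mul]
    ring
  rwa [this] at hs

lemma rog_exp_pow (t : ℝ) (n : ℕ) :
    (Complex.exp ((t:ℂ)*Complex.I))^n = Complex.exp ((n:ℂ)*(t:ℂ)*Complex.I) := by
  rw [← Complex.exp_nat_mul, mul_assoc]

/-- Rogosinski-type inequality under subordination: if `f ≺ h` then each section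
of `f` is dominated by the section majorant of `h` for `|z| ≤ 1/2`. -/
theorem rogosinski_subordination (f h φ : ℂ → ℂ) (a b : ℕ → ℂ)
    (hf : ∀ z : ℂ, ‖z‖ < 1 → HasSum (fun n => a n * z ^ n) (f z))
    (hh : ∀ z : ℂ, ‖z‖ < 1 → HasSum (fun n => b n * z ^ n) (h z))
    (hφ0 : φ 0 = 0)
    (hφb : ∀ z : ℂ, ‖z‖ < 1 → ‖φ z‖ ≤ 1)
    (hφa : AnalyticOnNhd ℂ φ (Metric.ball (0 : ℂ) 1))
    (hsub : ∀ z : ℂ, ‖z‖ < 1 → f z = h (φ z))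
    (k : ℕ) (z : ℂ) (hz : ‖z‖ ≤ 1 / 2) :
    ‖∑ n ∈ Finset.range (k + 1), a n * z ^ n‖ ≤
      ∑ n ∈ Finset.range (k + 1), ‖b n‖ * ‖z‖ ^ n := by
  have h2π : (0:ℝ) < 2*π := by positivity
  have h2πc : ((2*π : ℝ) :ℂ) ≠ 0 := by exact_mod_cast h2π.ne'
  have hφd : DifferentiableOn ℂ φ (Metric.ball 0 1) := hφa.differentiableOn
  set ψ : ℂ → ℂ := dslope φ 0 with hψ
  have hψb : ∀ w : ℂ, ‖w‖ < 1 → ‖ψ w‖ ≤ 1 := rog_psi_bound hφ0 hφb hφd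
  have hψd : DifferentiableOn ℂ ψ (Metric.ball 0 1) := by
    rw [hψ]
    exact (differentiableOn_dslope (Metric.ball_mem_nhds 0 one_pos)).mpr hφd
  have hφψ : ∀ w : ℂ, φ w = w * ψ w := by
    intro w
    have h9 := sub_smul_dslope φ 0 w
    rw [sub_zero, hφ0, sub_zero, smul_eq_mul] at h9
    rw [← h9, hψ]
  have hφlt : ∀ w : ℂ, ‖w‖ < 1 → ‖φ w‖ ≤ ‖w‖ := by
    intro w hw
    rw [hφψ w, norm_mul]
    calc ‖w‖ * ‖ψ w‖ ≤ ‖w‖ * 1 := mul_le_mul_of_nonneg_left (hψb w hw) (norm_nonneg w)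
    _ = ‖w‖ := mul_one _
  have hdn : ∀ n : ℕ, ∃ dn : ℕ → ℂ, ∀ w : ℂ, ‖w‖ < 1 → HasSum (fun m => dn m * w^m) ((ψ w)^n) :=
    fun n => rog_coeffs _ (hψd.pow n)
  choose d hd using hdn
  have hnorm_rexp : ∀ (r : ℝ), 0 ≤ r → ∀ t : ℝ, ‖(r:ℂ) * Complex.exp ((t:ℂ)*Complex.I)‖ = r := by
    intro r hr t
    rw [norm_mul, Complex.norm_real, Real.norm_of_nonneg hr,
      show ‖Complex.exp ((t:ℂ)*Complex.I)‖ = 1 from Complex.norm_exp_ofReal_mul_I t, mul_one]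
  -- the radius-r identity
  have key : ∀ r : ℝ, 0 < r → r < 1 →
      ∑ m ∈ Finset.range (k+1), a m * ((r:ℂ))^m * z^m
        = ∑ n ∈ Finset.range (k+1), b n * ((r:ℂ))^n *
            (∑ m ∈ Finset.range (k+1-n), d n m * ((r:ℂ))^m * z^(n+m)) := by
    intro r hr0 hr1
    have hrexp_lt : ∀ t : ℝ, ‖(r:ℂ) * Complex.exp ((t:ℂ)*Complex.I)‖ < 1 := fun t => by
      rw [hnorm_rexp r hr0.le]; exact hr1
    have eq1 := rog_swap hz k 0 hr0 a (rog_geo a f hf r hr0.le hr1)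
      (fun t => f ((r:ℂ) * Complex.exp ((t:ℂ)*Complex.I))) (fun t => hf _ (hrexp_lt t))
    have eq1' : (∫ t in (0:ℝ)..(2*π),
        f ((r:ℂ) * Complex.exp ((t:ℂ)*Complex.I)) * ((rogKer z k t : ℝ):ℂ))
        = (2*π) * ∑ m ∈ Finset.range (k+1), a m * ((r:ℂ))^m * z^m := by
      simpa using eq1
    have eqn : ∀ n : ℕ, (∫ t in (0:ℝ)..(2*π), Complex.exp ((n:ℂ)*t*Complex.I)
          * (ψ ((r:ℂ) * Complex.exp ((t:ℂ)*Complex.I)))^n * ((rogKer z k t : ℝ):ℂ))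
        = (2*π) * ∑ m ∈ Finset.range (k+1-n), d n m * ((r:ℂ))^m * z^(n+m) := by
      intro n
      exact rog_swap hz k n hr0 (d n) (rog_geo (d n) _ (hd n) r hr0.le hr1)
        (fun t => (ψ ((r:ℂ) * Complex.exp ((t:ℂ)*Complex.I)))^n) (fun t => hd n _ (hrexp_lt t))
    set μ := volume.restrict (Set.Ioc (0:ℝ) (2*π)) with hμ
    set Fo : ℕ → ℝ → ℂ := fun n t =>
      b n * (φ ((r:ℂ) * Complex.exp ((t:ℂ)*Complex.I)))^n * ((rogKer z k t : ℝ):ℂ) with hFo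
    have hφcont : Continuous fun t : ℝ => φ ((r:ℂ) * Complex.exp ((t:ℂ)*Complex.I)) := by
      apply (hφa.continuousOn).comp_continuous
      · fun_prop
      · intro t; rw [Metric.mem_ball, dist_zero_right]; exact hrexp_lt t
    have hFocont : ∀ n, Continuous (Fo n) := by
      intro n
      apply Continuous.mul
      · exact Continuous.mul continuous_const (hφcont.pow n)
      · exact Complex.continuous_ofReal.comp (rogKer_continuous z k)
    have hFoint : ∀ n, Integrable (Fo n) μ := fun n => (hFocont n).integrableOn_Ioc
    have hkerint : Integrable (fun t => rogKer z k t) μ := (rogKer_continuous z k).integrableOn_Ioc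
    have hkerintc : ∫ t, rogKer z k t ∂μ = 2*π := by
      rw [← intervalIntegral.integral_of_le h2π.le, rogKer_int z k hz]
    have hFonorm : ∀ n, (∫ t, ‖Fo n t‖ ∂μ) ≤ ‖b n‖ * r^n * (2*π) := by
      intro n
      have hptw : ∀ t, ‖Fo n t‖ ≤ ‖b n‖ * r^n * rogKer z k t := by
        intro t
        rw [hFo]; simp only
        rw [norm_mul, norm_mul, Complex.norm_real,
          Real.norm_of_nonneg (rogKer_nonneg hz k t), norm_pow]
        apply mul_le_mul_of_nonneg_right _ (rogKer_nonneg hz k t)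
        apply mul_le_mul_of_nonneg_left _ (norm_nonneg (b n))
        apply pow_le_pow_left₀ (norm_nonneg _)
        calc ‖φ ((r:ℂ) * Complex.exp ((t:ℂ)*Complex.I))‖
            ≤ ‖(r:ℂ) * Complex.exp ((t:ℂ)*Complex.I)‖ := hφlt _ (hrexp_lt t)
        _ = r := hnorm_rexp r hr0.le t
      calc (∫ t, ‖Fo n t‖ ∂μ) ≤ ∫ t, ‖b n‖ * r^n * rogKer z k t ∂μ :=
            integral_mono (hFoint n).norm (hkerint.const_mul _) hptw
      _ = ‖b n‖ * r^n * (2*π) := by rw [MeasureTheory.integral_const_mul, hkerintc]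
    have hFosum : Summable fun n => ∫ t, ‖Fo n t‖ ∂μ := by
      apply Summable.of_nonneg_of_le (fun n => integral_nonneg (fun t => norm_nonneg _)) hFonorm
      exact (rog_geo b h hh r hr0.le hr1).mul_right _
    have hkey := MeasureTheory.hasSum_integral_of_summable_integral_norm hFoint hFosum
    have htsum : ∀ t : ℝ, (∑' n, Fo n t)
        = f ((r:ℂ) * Complex.exp ((t:ℂ)*Complex.I)) * ((rogKer z k t : ℝ):ℂ) := by
      intro t
      have hφw : ‖φ ((r:ℂ) * Complex.exp ((t:ℂ)*Complex.I))‖ < 1 :=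
        lt_of_le_of_lt (hφlt _ (hrexp_lt t)) (by rw [hnorm_rexp r hr0.le t]; exact hr1)
      have h8 := (hh _ hφw).mul_right ((rogKer z k t : ℝ):ℂ)
      rw [← hsub _ (hrexp_lt t)] at h8
      exact h8.tsum_eq
    simp_rw [htsum] at hkey
    have hFoeq : ∀ n, (∫ t, Fo n t ∂μ)
        = b n * ((r:ℂ))^n * ((2*π) * ∑ m ∈ Finset.range (k+1-n), d n m * ((r:ℂ))^m * z^(n+m)) := by
      intro n
      have hptw : ∀ t, Fo n t = b n * ((r:ℂ))^n * (Complex.exp ((n:ℂ)*t*Complex.I)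
          * (ψ ((r:ℂ) * Complex.exp ((t:ℂ)*Complex.I)))^n * ((rogKer z k t : ℝ):ℂ)) := by
        intro t
        rw [hFo]; simp only
        rw [hφψ ((r:ℂ) * Complex.exp ((t:ℂ)*Complex.I)), mul_pow, mul_pow, rog_exp_pow]
        ring
      simp_rw [hptw]
      rw [MeasureTheory.integral_const_mul, ← intervalIntegral.integral_of_le h2π.le, eqn n]
    simp_rw [hFoeq] at hkey
    rw [hμ, ← intervalIntegral.integral_of_le h2π.le, eq1'] at hkey
    have hfin : HasSum (fun n => b n * ((r:ℂ))^n
        * ((2*π) * ∑ m ∈ Finset.range (k+1-n), d n m * ((r:ℂ))^m * z^(n+m)))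
        (∑ n ∈ Finset.range (k+1), b n * ((r:ℂ))^n
          * ((2*π) * ∑ m ∈ Finset.range (k+1-n), d n m * ((r:ℂ))^m * z^(n+m))) := by
      apply hasSum_sum_of_ne_finset_zero
      intro n hn
      rw [Finset.mem_range, not_lt] at hn
      have : k+1-n = 0 := by omega
      rw [this]
      simp
    have hEq := hkey.unique hfin
    apply mul_left_cancel₀ h2πc
    push_cast
    rw [hEq, Finset.mul_sum]
    apply Finset.sum_congr rfl
    intro n _
    ring
  -- limit r → 1⁻
  have hlim : ∑ m ∈ Finset.range (k+1), a m * z^m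
      = ∑ n ∈ Finset.range (k+1), b n *
          (∑ m ∈ Finset.range (k+1-n), d n m * z^(n+m)) := by
    have cL : Continuous (fun r : ℝ => ∑ m ∈ Finset.range (k+1), a m * ((r:ℂ))^m * z^m) := by
      apply continuous_finset_sum; intro m _; fun_prop
    have cR : Continuous (fun r : ℝ => ∑ n ∈ Finset.range (k+1), b n * ((r:ℂ))^n *
        (∑ m ∈ Finset.range (k+1-n), d n m * ((r:ℂ))^m * z^(n+m))) := by
      apply continuous_finset_sum; intro n _
      apply Continuous.mul
      · fun_prop
      · apply continuous_finset_sum; intro m _; fun_prop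
    have tL := (cL.tendsto 1).mono_left (nhdsWithin_le_nhds (s := Set.Iio (1:ℝ)))
    have tR := (cR.tendsto 1).mono_left (nhdsWithin_le_nhds (s := Set.Iio (1:ℝ)))
    have heq : (fun r : ℝ => ∑ m ∈ Finset.range (k+1), a m * ((r:ℂ))^m * z^m)
        =ᶠ[𝓝[<] (1:ℝ)] (fun r : ℝ => ∑ n ∈ Finset.range (k+1), b n * ((r:ℂ))^n *
          (∑ m ∈ Finset.range (k+1-n), d n m * ((r:ℂ))^m * z^(n+m))) := by
      filter_upwards [Ioo_mem_nhdsLT_of_mem (Set.mem_Ioc.mpr ⟨one_pos, le_refl (1:ℝ)⟩)] with r hr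
      exact key r hr.1 hr.2
    have := tendsto_nhds_unique (tL.congr' heq) tR
    simpa using this
  rw [hlim]
  calc ‖∑ n ∈ Finset.range (k+1), b n * (∑ m ∈ Finset.range (k+1-n), d n m * z^(n+m))‖
      ≤ ∑ n ∈ Finset.range (k+1), ‖b n * (∑ m ∈ Finset.range (k+1-n), d n m * z^(n+m))‖ :=
        norm_sum_le _ _
  _ ≤ ∑ n ∈ Finset.range (k+1), ‖b n‖ * ‖z‖^n := by
      apply Finset.sum_le_sum
      intro n hn
      rw [Finset.mem_range, Nat.lt_succ_iff] at hn
      rw [norm_mul]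
      apply mul_le_mul_of_nonneg_left _ (norm_nonneg (b n))
      have hsplit : ∑ m ∈ Finset.range (k+1-n), d n m * z^(n+m)
          = z^n * ∑ m ∈ Finset.range (k+1-n), d n m * z^m := by
        rw [Finset.mul_sum]
        apply Finset.sum_congr rfl
        intro m _
        rw [pow_add]
        ring
      rw [hsplit, norm_mul, norm_pow]
      have hkn : k+1-n = (k-n)+1 := by omega
      rw [hkn]
      calc ‖z‖^n * ‖∑ m ∈ Finset.range ((k-n)+1), d n m * z^m‖
          ≤ ‖z‖^n * 1 := by
            apply mul_le_mul_of_nonneg_left _ (pow_nonneg (norm_nonneg z) n)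
            apply rog_section_bound hz (k-n) (d n) (fun w => (ψ w)^n) (hd n)
            intro w hw
            rw [norm_pow]
            exact pow_le_one₀ (norm_nonneg _) (hψb w hw)
      _ = ‖z‖^n := mul_one _
end
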